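/- arXiv:math/0508315 — 6 statements merged into one kernel-verified Lean document; each statement's English description precedes it below -/
import Mathlib

section
/- The unique entire solution Φ of the Poincaré functional equation Φ(λz) = p(Φ(z)) with Φ(0) = 0, Φ'(0) = 1 is an entire function of growth order at most ρ = log d / log λ; more precisely, there exist constants A > 0 and B > 0 such that |Φ(z)| ≤ A·exp(B·|z|^ρ) for all z ∈ ℂ. -/
open Filter Topology

/-- The unique entire solution `Φ` of the Poincaré functional equation
`Φ(λz) = p(Φ(z))`, `Φ(0) = 0`, `Φ'(0) = 1` has growth order at most `ρ = log d / log λ`: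
there are constants `A, B > 0` with `|Φ(z)| ≤ A · exp(B · |z|^ρ)` for all `z`. -/
theorem poincare_function_growth_order
    (p : Polynomial ℝ) (d : ℕ) (lam : ℝ)
    (hd : 2 ≤ d) (hdeg : p.natDegree = d)
    (hc0 : p.coeff 0 = 0) (hc1 : p.coeff 1 = lam) (hlam : 1 < lam)
    (Φ : ℂ → ℂ) (hΦ : Differentiable ℂ Φ)
    (hfe : ∀ z : ℂ, Φ (lam * z) = Polynomial.aeval (Φ z) p)
    (hΦ0 : Φ 0 = 0) (hΦ'0 : deriv Φ 0 = 1) :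
    ∃ A > (0 : ℝ), ∃ B > (0 : ℝ), ∀ z : ℂ,
      ‖Φ z‖ ≤ A * Real.exp (B * ‖z‖ ^ (Real.log d / Real.log lam)) := by
  have hlam0 : (0 : ℝ) < lam := lt_trans one_pos hlam
  have hd0 : 0 < d := lt_of_lt_of_le two_pos hd
  set ρ : ℝ := Real.log d / Real.log lam with hρdef
  -- bound on p
  set C : ℝ := ∑ i ∈ Finset.range (d + 1), |p.coeff i| with hCdef
  have hpb : ∀ w : ℂ, ‖Polynomial.aeval w p‖ ≤ C * max 1 (‖w‖) ^ d := by
    intro w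
    have h1 : (Polynomial.aeval w p : ℂ) = (p.map (algebraMap ℝ ℂ)).eval w := by
      rw [Polynomial.aeval_def, Polynomial.eval_map]
    have hdq : (p.map (algebraMap ℝ ℂ)).natDegree < d + 1 :=
      lt_of_le_of_lt (le_of_le_of_eq Polynomial.natDegree_map_le hdeg) (Nat.lt_succ_self d)
    rw [h1, Polynomial.eval_eq_sum_range' hdq]
    calc ‖∑ i ∈ Finset.range (d + 1), (p.map (algebraMap ℝ ℂ)).coeff i * w ^ i‖
        ≤ ∑ i ∈ Finset.range (d + 1),
            ‖(p.map (algebraMap ℝ ℂ)).coeff i * w ^ i‖ :=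
          norm_sum_le _ _
      _ ≤ ∑ i ∈ Finset.range (d + 1), |p.coeff i| * max 1 (‖w‖) ^ d := by
          apply Finset.sum_le_sum
          intro i hi
          rw [norm_mul, Polynomial.coeff_map, norm_pow,
            show ((algebraMap ℝ ℂ) (p.coeff i)) = ((p.coeff i : ℝ) : ℂ) from rfl,
            Complex.norm_real, Real.norm_eq_abs]
          refine mul_le_mul_of_nonneg_left ?_ (abs_nonneg _)
          calc ‖w‖ ^ i ≤ max 1 (‖w‖) ^ i :=
                pow_le_pow_left₀ (norm_nonneg w) (le_max_right _ _) i
            _ ≤ max 1 (‖w‖) ^ d :=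
                pow_le_pow_right₀ (le_max_left _ _) (Nat.lt_succ_iff.mp (Finset.mem_range.mp hi))
      _ = C * max 1 (‖w‖) ^ d := by rw [← Finset.sum_mul]
  -- bound on Φ on the unit ball
  obtain ⟨M, hM⟩ := (isCompact_closedBall (0 : ℂ) 1).exists_bound_of_continuousOn
    hΦ.continuous.continuousOn
  set K : ℝ := max 2 (max C M) with hKdef
  have hK2 : (2 : ℝ) ≤ K := le_max_left _ _
  have hK1 : (1 : ℝ) ≤ K := le_trans one_le_two hK2
  have hK0 : (0 : ℝ) < K := lt_of_lt_of_le one_pos hK1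
  have hKC : C ≤ K := le_trans (le_max_left _ _) (le_max_right _ _)
  have hKM : M ≤ K := le_trans (le_max_right _ _) (le_max_right _ _)
  -- key induction
  have key : ∀ n : ℕ, ∀ z : ℂ, ‖z‖ ≤ 1 →
      ‖Φ ((lam : ℂ) ^ n * z)‖ ≤ K ^ (2 * d ^ n - 1) := by
    intro n
    induction n with
    | zero =>
      intro z hz
      simp only [pow_zero, one_mul]
      have h1 : ‖Φ z‖ ≤ M := by
        have := hM z (by simpa [Metric.mem_closedBall] using hz)
        simpa using this
      calc ‖Φ z‖ ≤ M := h1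
        _ ≤ K := hKM
        _ = K ^ (2 * d ^ 0 - 1) := by norm_num
    | succ n ih =>
      intro z hz
      have hstep : (lam : ℂ) ^ (n + 1) * z = (lam : ℂ) * ((lam : ℂ) ^ n * z) := by ring
      rw [hstep, hfe]
      have hKpow1 : (1 : ℝ) ≤ K ^ (2 * d ^ n - 1) := one_le_pow₀ hK1
      have hmax : max 1 (‖Φ ((lam : ℂ) ^ n * z)‖) ≤ K ^ (2 * d ^ n - 1) :=
        max_le hKpow1 (ih z hz)
      have hdn1 : 1 ≤ d ^ n := Nat.one_le_pow _ _ hd0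
      have hdle : d ≤ d ^ (n + 1) := Nat.le_self_pow (Nat.succ_ne_zero n) d
      have harith : 1 + (2 * d ^ n - 1) * d ≤ 2 * d ^ (n + 1) - 1 := by
        have h2 : (2 * d ^ n - 1) * d = 2 * d ^ (n + 1) - d := by
          rw [Nat.sub_mul, one_mul]
          congr 1
          rw [pow_succ]
          ring
        omega
      calc ‖Polynomial.aeval (Φ ((lam : ℂ) ^ n * z)) p‖
          ≤ C * max 1 (‖Φ ((lam : ℂ) ^ n * z)‖) ^ d := hpb _
        _ ≤ K * (K ^ (2 * d ^ n - 1)) ^ d := by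
            refine mul_le_mul hKC (pow_le_pow_left₀ ?_ hmax d) (by positivity) hK0.le
            exact le_trans zero_le_one (le_max_left _ _)
        _ = K ^ (1 + (2 * d ^ n - 1) * d) := by rw [pow_add, pow_one, ← pow_mul]
        _ ≤ K ^ (2 * d ^ (n + 1) - 1) := pow_le_pow_right₀ hK1 harith
  -- corollary on disks of radius lam ^ n
  have cor : ∀ n : ℕ, ∀ z : ℂ, ‖z‖ ≤ lam ^ n →
      ‖Φ z‖ ≤ K ^ (2 * d ^ n) := by
    intro n z hz
    have hlp : (0 : ℝ) < lam ^ n := pow_pos hlam0 n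
    have hne : ((lam : ℂ)) ^ n ≠ 0 := by
      simp only [ne_eq, pow_eq_zero_iff', Complex.ofReal_eq_zero]
      exact fun h => absurd h.1 (ne_of_gt hlam0)
    have hzrep : z = (lam : ℂ) ^ n * (z / (lam : ℂ) ^ n) := by field_simp
    have habsq : ‖z / (lam : ℂ) ^ n‖ ≤ 1 := by
      rw [norm_div, norm_pow, Complex.norm_real, Real.norm_eq_abs, abs_of_pos hlam0, div_le_one hlp]
      exact hz
    calc ‖Φ z‖ = ‖Φ ((lam : ℂ) ^ n * (z / (lam : ℂ) ^ n))‖ := by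
          rw [← hzrep]
      _ ≤ K ^ (2 * d ^ n - 1) := key n _ habsq
      _ ≤ K ^ (2 * d ^ n) := pow_le_pow_right₀ hK1 (Nat.sub_le _ _)
  -- rpow identities
  have hloglam : (0 : ℝ) < Real.log lam := Real.log_pos hlam
  have hd1 : (1 : ℝ) < (d : ℝ) := by exact_mod_cast lt_of_lt_of_le one_lt_two hd
  have hρ0 : 0 < ρ := div_pos (Real.log_pos hd1) hloglam
  have hlamrho : lam ^ ρ = (d : ℝ) := by
    rw [Real.rpow_def_of_pos hlam0, hρdef, mul_comm, div_mul_cancel₀ _ (ne_of_gt hloglam)]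
    exact Real.exp_log (by positivity)
  have hlrho : ∀ k : ℕ, ((lam ^ k : ℝ)) ^ ρ = (d : ℝ) ^ k := by
    intro k
    rw [← Real.rpow_natCast lam k, ← Real.rpow_mul hlam0.le, mul_comm,
      Real.rpow_mul hlam0.le, hlamrho, Real.rpow_natCast]
  have hlogK : 0 < Real.log K := Real.log_pos (lt_of_lt_of_le one_lt_two hK2)
  -- final constants
  refine ⟨K ^ 2, by positivity, 2 * d * Real.log K,
    by positivity, fun z => ?_⟩
  have habs0 : (0 : ℝ) ≤ ‖z‖ := norm_nonneg z
  have hrpow0 : (0 : ℝ) ≤ ‖z‖ ^ ρ := Real.rpow_nonneg habs0 ρ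
  have hexp1 : 1 ≤ Real.exp (2 * d * Real.log K * ‖z‖ ^ ρ) :=
    Real.one_le_exp (by positivity)
  by_cases hz1 : ‖z‖ ≤ 1
  · have h1 : ‖Φ z‖ ≤ K ^ (2 * d ^ 0) := cor 0 z (by simpa using hz1)
    calc ‖Φ z‖ ≤ K ^ 2 := by simpa using h1
      _ ≤ K ^ 2 * Real.exp (2 * d * Real.log K * ‖z‖ ^ ρ) :=
          le_mul_of_one_le_right (by positivity) hexp1
  · push_neg at hz1
    have hex : ∃ n : ℕ, ‖z‖ ≤ lam ^ n :=
      (pow_unbounded_of_one_lt _ hlam).imp fun n h => h.le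
    set n := Nat.find hex with hn_def
    have hn : ‖z‖ ≤ lam ^ n := Nat.find_spec hex
    have hn0 : n ≠ 0 := by
      intro h
      rw [h, pow_zero] at hn
      exact absurd hn (not_le.mpr hz1)
    have hprev : lam ^ (n - 1) < ‖z‖ :=
      not_le.mp (Nat.find_min hex (Nat.pred_lt hn0))
    have hdn : (d : ℝ) ^ n ≤ (d : ℝ) * ‖z‖ ^ ρ := by
      have h1 : ((lam ^ (n - 1) : ℝ)) ^ ρ ≤ ‖z‖ ^ ρ :=
        Real.rpow_le_rpow (pow_pos hlam0 _).le hprev.le hρ0.le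
      rw [hlrho] at h1
      calc (d : ℝ) ^ n = (d : ℝ) * (d : ℝ) ^ (n - 1) := by
            rw [← pow_succ']
            congr 1
            omega
        _ ≤ (d : ℝ) * ‖z‖ ^ ρ :=
            mul_le_mul_of_nonneg_left h1 (Nat.cast_nonneg d)
    calc ‖Φ z‖ ≤ K ^ (2 * d ^ n) := cor n z hn
      _ = Real.exp ((2 * d ^ n : ℕ) * Real.log K) := by
          rw [← Real.exp_log (pow_pos hK0 (2 * d ^ n)), Real.log_pow]
      _ ≤ Real.exp (2 * d * Real.log K * ‖z‖ ^ ρ) := by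
          apply Real.exp_le_exp.mpr
          have : ((2 * d ^ n : ℕ) : ℝ) ≤ 2 * ((d : ℝ) * ‖z‖ ^ ρ) := by
            push_cast
            nlinarith [hdn]
          nlinarith [hlogK.le, this]
      _ ≤ K ^ 2 * Real.exp (2 * d * Real.log K * ‖z‖ ^ ρ) :=
          le_mul_of_one_le_left (Real.exp_pos _).le (one_le_pow₀ hK1)
end

section
/- If the basin of attraction F_∞ of ∞ of p contains the angular region W_β for some β > 0, then for every ε with 0 < ε < β one has |Φ(z)| → ∞ as |z| → ∞ uniformly on the sector {z ≠ 0 : |arg z| ≤ β − ε}; moreover, for every K > 1 there exists a constant C > 0 such that |Φ(z)| ≥ C·|z|^K for all z ≠ 0 with |arg z| ≤ β − ε. -/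
open Filter Topology

/-- The basin of attraction of `∞` of the polynomial `p`: the set of complex numbers whose
orbit under iteration of `p` tends to infinity. -/
def polyBasin (p : Polynomial ℝ) : Set ℂ :=
  {z : ℂ | Tendsto (fun n : ℕ => ‖(fun w : ℂ => Polynomial.aeval w p)^[n] z‖)
    atTop atTop}

lemma helper_growth (p : Polynomial ℝ) (d : ℕ) (hd : 2 ≤ d) (hdeg : p.natDegree = d)
    (c : ℝ) (hc : 1 ≤ c) :
    ∃ M : ℝ, 1 ≤ M ∧ ∀ w : ℂ, M ≤ ‖w‖ →
      c * ‖w‖ ≤ ‖Polynomial.aeval w p‖ := by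
  have hp0 : p ≠ 0 := by
    intro h
    rw [h, Polynomial.natDegree_zero] at hdeg
    omega
  have ha : p.coeff d ≠ 0 := by
    rw [← hdeg, Polynomial.coeff_natDegree]
    exact Polynomial.leadingCoeff_ne_zero.mpr hp0
  set a : ℝ := |p.coeff d| with haa
  have ha' : 0 < a := abs_pos.mpr ha
  set B : ℝ := ∑ i ∈ Finset.range d, |p.coeff i| with hB
  have hBnn : 0 ≤ B := Finset.sum_nonneg fun i _ => abs_nonneg _
  refine ⟨max 1 ((B + c) / a), le_max_left _ _, fun w hw => ?_⟩
  rw [max_le_iff] at hw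
  obtain ⟨hw1, hw2⟩ := hw
  have hwpos : (0 : ℝ) < ‖w‖ := lt_of_lt_of_le one_pos hw1
  have h2 : B + c ≤ a * ‖w‖ := by
    rw [div_le_iff₀ ha'] at hw2
    nlinarith
  have hev : Polynomial.aeval w p =
      p.coeff d • w ^ d + ∑ i ∈ Finset.range d, p.coeff i • w ^ i := by
    rw [Polynomial.aeval_eq_sum_range, hdeg, Finset.sum_range_succ, add_comm]
  set S : ℂ := ∑ i ∈ Finset.range d, p.coeff i • w ^ i with hS
  have hSle : ‖S‖ ≤ B * ‖w‖ ^ (d - 1) := by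
    calc ‖S‖ ≤ ∑ i ∈ Finset.range d, ‖p.coeff i • w ^ i‖ := norm_sum_le _ _
    _ ≤ ∑ i ∈ Finset.range d, |p.coeff i| * ‖w‖ ^ (d - 1) := by
          refine Finset.sum_le_sum fun i hi => ?_
          rw [norm_smul, Real.norm_eq_abs, norm_pow]
          refine mul_le_mul_of_nonneg_left ?_ (abs_nonneg _)
          exact pow_le_pow_right₀ hw1 (by have := Finset.mem_range.mp hi; omega)
    _ = B * ‖w‖ ^ (d - 1) := by rw [← Finset.sum_mul]
  have hAd : ‖p.coeff d • w ^ d‖ = a * ‖w‖ ^ d := by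
    rw [norm_smul, Real.norm_eq_abs, norm_pow]
  have htri : a * ‖w‖ ^ d - ‖S‖ ≤ ‖Polynomial.aeval w p‖ := by
    rw [hev, ← hAd]
    have := norm_add_le (p.coeff d • w ^ d + S) (-S)
    simp only [add_neg_cancel_right, norm_neg] at this
    linarith
  have hpowd : ‖w‖ ^ d = ‖w‖ * ‖w‖ ^ (d - 1) := by
    rw [← pow_succ']
    congr 1
    omega
  have hpow1 : ‖w‖ ≤ ‖w‖ ^ (d - 1) := by
    calc ‖w‖ = ‖w‖ ^ 1 := (pow_one _).symm
    _ ≤ ‖w‖ ^ (d - 1) := pow_le_pow_right₀ hw1 (by omega)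
  have hpownn : (0:ℝ) ≤ ‖w‖ ^ (d - 1) := by positivity
  nlinarith [mul_le_mul_of_nonneg_left hpow1 (by linarith : (0:ℝ) ≤ c)]

lemma helper_iter_ge (p : Polynomial ℝ) (M c : ℝ) (hc : 1 ≤ c) (hM : 0 < M)
    (hgrow : ∀ w : ℂ, M ≤ ‖w‖ →
      c * ‖w‖ ≤ ‖Polynomial.aeval w p‖) :
    ∀ (v : ℂ), M ≤ ‖v‖ → ∀ j : ℕ,
      c ^ j * M ≤ ‖(fun w : ℂ => Polynomial.aeval w p)^[j] v‖ := by
  intro v hv j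
  induction j with
  | zero => simpa using hv
  | succ j ih =>
    have h1 : M ≤ ‖(fun w : ℂ => Polynomial.aeval w p)^[j] v‖ :=
      le_trans (le_mul_of_one_le_left hM.le (one_le_pow₀ hc)) ih
    rw [Function.iterate_succ_apply']
    calc c ^ (j + 1) * M = c * (c ^ j * M) := by ring
    _ ≤ c * ‖(fun w : ℂ => Polynomial.aeval w p)^[j] v‖ :=
        mul_le_mul_of_nonneg_left ih (by linarith)
    _ ≤ _ := hgrow _ h1

lemma helper_basin_ne (p : Polynomial ℝ) (hc0 : p.coeff 0 = 0) (u : ℂ)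
    (hu : u ∈ polyBasin p) (n : ℕ) :
    (fun w : ℂ => Polynomial.aeval w p)^[n] u ≠ 0 := by
  intro h0
  have hP0 : (fun w : ℂ => Polynomial.aeval w p) 0 = 0 := by
    simp only [Polynomial.aeval_def, Polynomial.eval₂_at_zero, hc0, map_zero]
  have htend : Tendsto (fun m : ℕ => ‖(fun w : ℂ => Polynomial.aeval w p)^[m] u‖)
      atTop atTop := hu
  obtain ⟨m, hm1, hmn⟩ := ((htend.eventually_ge_atTop 1).and (eventually_ge_atTop n)).exists
  have hz : (fun w : ℂ => Polynomial.aeval w p)^[m] u = 0 := by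
    have hm' : m = (m - n) + n := by omega
    rw [hm', Function.iterate_add_apply, h0, Function.iterate_fixed hP0]
  rw [hz] at hm1
  simp at hm1
  linarith

lemma helper_escape (p : Polynomial ℝ) (M c : ℝ) (hc : 1 ≤ c) (hM : 0 < M)
    (hgrow : ∀ w : ℂ, M ≤ ‖w‖ →
      c * ‖w‖ ≤ ‖Polynomial.aeval w p‖)
    (K' : Set ℂ) (hK : IsCompact K') (hKF : ∀ u ∈ K', u ∈ polyBasin p) :
    ∃ N : ℕ, ∀ u ∈ K', M ≤ ‖(fun w : ℂ => Polynomial.aeval w p)^[N] u‖ := by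
  set f : ℕ → ℂ → ℝ := fun n v => ‖(fun w : ℂ => Polynomial.aeval w p)^[n] v‖
    with hf
  have hcont : ∀ n, Continuous (f n) :=
    fun n => continuous_norm.comp ((p.continuous_aeval).iterate n)
  have hcover : K' ⊆ ⋃ n : ℕ, {v | M < f n v} := by
    intro u hu
    have htend : Tendsto (fun m : ℕ => f m u) atTop atTop := hKF u hu
    obtain ⟨n, hn⟩ := (htend.eventually_ge_atTop (M + 1)).exists
    exact Set.mem_iUnion.2 ⟨n, by simp only [Set.mem_setOf_eq]; linarith⟩
  obtain ⟨t, ht⟩ := hK.elim_finite_subcover _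
    (fun n => isOpen_lt continuous_const (hcont n)) hcover
  refine ⟨t.sup id, fun u hu => ?_⟩
  obtain ⟨n, hnt, hn⟩ := Set.mem_iUnion₂.mp (ht hu)
  have hn' : M ≤ f n u := le_of_lt hn
  have hle : n ≤ t.sup id := Finset.le_sup (f := id) hnt
  have hsplit : t.sup id = (t.sup id - n) + n := by omega
  have := helper_iter_ge p M c hc hM hgrow _ hn' (t.sup id - n)
  calc M ≤ c ^ (t.sup id - n) * M :=
        le_mul_of_one_le_left hM.le (one_le_pow₀ hc)
  _ ≤ _ := by
        have h2 : (fun w : ℂ => Polynomial.aeval w p)^[t.sup id] u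
            = (fun w : ℂ => Polynomial.aeval w p)^[t.sup id - n]
              ((fun w : ℂ => Polynomial.aeval w p)^[n] u) := by
          conv_lhs => rw [hsplit]
          rw [Function.iterate_add_apply]
        simpa [hf, h2] using this

open Real in
lemma helper_arg_small (u : ℂ) (hu : ‖u - 1‖ < 1/2) :
    u ≠ 0 ∧ (1:ℝ)/2 ≤ ‖u‖ ∧ |Complex.arg u| ≤ π * ‖u - 1‖ := by
  have hre1 : |(u - 1).re| ≤ ‖u - 1‖ := Complex.abs_re_le_norm _
  have hre : (1:ℝ)/2 ≤ u.re := by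
    have : (u - 1).re = u.re - 1 := by simp
    rw [this] at hre1
    have := abs_le.mp hre1
    linarith
  have hu0 : u ≠ 0 := by
    intro h
    rw [h] at hre
    norm_num at hre
  have habs : (1:ℝ)/2 ≤ ‖u‖ := by
    have h1 : |u.re| ≤ ‖u‖ := Complex.abs_re_le_norm u
    have := abs_le.mp h1
    linarith [le_abs_self u.re]
  have harg2 : |Complex.arg u| ≤ π / 2 :=
    Complex.abs_arg_le_pi_div_two_iff.mpr (by linarith)
  have hsin : Real.sin |Complex.arg u| = |Real.sin (Complex.arg u)| := by
    rcases le_or_gt 0 (Complex.arg u) with h | h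
    · rw [abs_of_nonneg h, abs_of_nonneg]
      exact Real.sin_nonneg_of_nonneg_of_le_pi h (by linarith [Real.pi_pos, abs_le.mp harg2])
    · rw [abs_of_neg h, Real.sin_neg, abs_of_nonpos (Real.sin_nonpos_of_nonpos_of_neg_pi_le h.le
        (by linarith [Real.pi_pos, (abs_le.mp harg2).1]))]
  have hjordan : 2 / π * |Complex.arg u| ≤ Real.sin |Complex.arg u| :=
    Real.mul_le_sin (abs_nonneg _) harg2
  have hsinval : |Real.sin (Complex.arg u)| = |u.im| / ‖u‖ := by
    rw [Complex.sin_arg, abs_div, abs_of_nonneg (norm_nonneg u)]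
  have him : |u.im| ≤ ‖u - 1‖ := by
    have h1 : (u - 1).im = u.im := by simp
    have h2 := Complex.abs_im_le_norm (u - 1)
    rw [h1] at h2
    exact h2
  have hdiv : |u.im| / ‖u‖ ≤ 2 * ‖u - 1‖ := by
    rw [div_le_iff₀ (by linarith : (0:ℝ) < ‖u‖)]
    nlinarith [abs_nonneg u.im, norm_nonneg (u - 1)]
  refine ⟨hu0, habs, ?_⟩
  have hpi : (0:ℝ) < π := Real.pi_pos
  have hfin : 2 / π * |Complex.arg u| ≤ 2 * ‖u - 1‖ := by
    rw [hsin, hsinval] at hjordan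
    linarith
  rw [div_mul_eq_mul_div, div_le_iff₀ hpi] at hfin
  nlinarith

open Real in
lemma helper_sector_iff (c₀ : ℝ) (hc₀ : 0 ≤ c₀) (hc₀π : c₀ ≤ π) (z : ℂ) (hz : z ≠ 0) :
    |Complex.arg z| ≤ c₀ ↔ ‖z‖ * Real.cos c₀ ≤ z.re := by
  have habs : (0:ℝ) < ‖z‖ := norm_pos_iff.mpr hz
  have hre : ‖z‖ * Real.cos (Complex.arg z) = z.re := by
    rw [Complex.cos_arg hz]
    field_simp
  constructor
  · intro h
    have hcos : Real.cos c₀ ≤ Real.cos |Complex.arg z| :=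
      Real.cos_le_cos_of_nonneg_of_le_pi (abs_nonneg _) hc₀π h
    rw [Real.cos_abs] at hcos
    calc ‖z‖ * Real.cos c₀ ≤ ‖z‖ * Real.cos (Complex.arg z) :=
          mul_le_mul_of_nonneg_left hcos habs.le
    _ = z.re := hre
  · intro h
    by_contra hlt
    push_neg at hlt
    have h1 : Real.cos |Complex.arg z| < Real.cos c₀ :=
      Real.strictAntiOn_cos ⟨hc₀, hc₀π⟩ ⟨abs_nonneg _, Complex.abs_arg_le_pi z⟩ hlt
    rw [Real.cos_abs] at h1
    nlinarith

lemma helper_compact (c₀ a b : ℝ) :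
    IsCompact {z : ℂ | ‖z‖ * Real.cos c₀ ≤ z.re ∧
      a ≤ ‖z‖ ∧ ‖z‖ ≤ b} := by
  apply Metric.isCompact_of_isClosed_isBounded
  · refine IsClosed.inter ?_ (IsClosed.inter ?_ ?_)
    · exact isClosed_le (continuous_norm.mul continuous_const) Complex.continuous_re
    · exact isClosed_le continuous_const continuous_norm
    · exact isClosed_le continuous_norm continuous_const
  · apply Bornology.IsBounded.subset (Metric.isBounded_closedBall (x := (0:ℂ)) (r := b))
    intro z hz
    simp only [Metric.mem_closedBall, Complex.dist_eq, sub_zero]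
    exact hz.2.2

set_option maxHeartbeats 1000000 in
/-- If the basin of attraction of `∞` of `p` contains the angular region
`W_β`, then `|Φ(z)| → ∞` uniformly on every sector `|arg z| ≤ β − ε`, and for every `K > 1`
there is `C > 0` with `|Φ(z)| ≥ C·|z|^K` on that sector. -/
theorem poincare_function_tendsto_infty_on_sector
    (p : Polynomial ℝ) (d : ℕ) (lam : ℝ)
    (hd : 2 ≤ d) (hdeg : p.natDegree = d)
    (hc0 : p.coeff 0 = 0) (hc1 : p.coeff 1 = lam) (hlam : 1 < lam)
    (Φ : ℂ → ℂ) (hΦ : Differentiable ℂ Φ)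
    (hfe : ∀ z : ℂ, Φ (lam * z) = Polynomial.aeval (Φ z) p)
    (hΦ0 : Φ 0 = 0) (hΦ'0 : deriv Φ 0 = 1)
    (β : ℝ) (hβ : 0 < β)
    (hW : ∀ z : ℂ, z ≠ 0 → |Complex.arg z| < β → z ∈ polyBasin p) :
    ∀ ε : ℝ, 0 < ε → ε < β →
      ((∀ R : ℝ, ∃ r : ℝ, ∀ z : ℂ, z ≠ 0 → |Complex.arg z| ≤ β - ε →
          r ≤ ‖z‖ → R ≤ ‖Φ z‖) ∧
       (∀ K : ℝ, 1 < K → ∃ C > (0 : ℝ), ∀ z : ℂ, z ≠ 0 → |Complex.arg z| ≤ β - ε →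
          C * ‖z‖ ^ K ≤ ‖Φ z‖)) := by
  intro ε hε hεβ
  have hπ : (0:ℝ) < Real.pi := Real.pi_pos
  have hlam0 : (0:ℝ) < lam := by linarith
  -- iterated functional equation
  have hiter : ∀ (n : ℕ) (w : ℂ),
      Φ ((lam:ℂ)^n * w) = (fun v : ℂ => Polynomial.aeval v p)^[n] (Φ w) := by
    intro n
    induction n with
    | zero => intro w; simp
    | succ n ih =>
      intro w
      have h1 : ((lam:ℂ))^(n+1) * w = (lam:ℂ) * ((lam:ℂ)^n * w) := by ring
      rw [h1, hfe, ih, Function.iterate_succ_apply']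
  -- sector angle and perturbation bounds
  set c₀ : ℝ := min (β - ε) Real.pi with hc₀def
  have hc₀pos : 0 < c₀ := lt_min (by linarith) hπ
  have hc₀π : c₀ ≤ Real.pi := min_le_right _ _
  have hc₀βε : c₀ ≤ β - ε := min_le_left _ _
  set δ' : ℝ := if β - ε < Real.pi then min ε (Real.pi - (β - ε)) else 1 with hδ'def
  have hδ'pos : 0 < δ' := by
    rw [hδ'def]
    split
    · exact lt_min hε (by linarith)
    · norm_num
  set δ : ℝ := min (1/2) (δ' / (4 * Real.pi)) with hδdef
  have hδpos : 0 < δ := lt_min (by norm_num) (by positivity)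
  have hδhalf : δ ≤ 1/2 := min_le_left _ _
  have hδarg : Real.pi * δ < δ' := by
    have h1 : δ ≤ δ' / (4 * Real.pi) := min_le_right _ _
    have h2 : Real.pi * (δ' / (4 * Real.pi)) = δ' / 4 := by field_simp
    nlinarith
  -- slope limit at 0
  have hslope : Tendsto (fun z : ℂ => Φ z / z) (𝓝[≠] (0:ℂ)) (𝓝 1) := by
    have h := (hΦ 0).hasDerivAt
    rw [hasDerivAt_iff_tendsto_slope] at h
    have hs : slope Φ 0 = fun z : ℂ => Φ z / z := by
      funext z
      rw [slope_def_field, hΦ0, sub_zero, sub_zero]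
    rw [hs, hΦ'0] at h
    exact h
  obtain ⟨r₁, hr₁pos, hr₁⟩ := Metric.tendsto_nhdsWithin_nhds.mp hslope δ hδpos
  set r₀ : ℝ := r₁ / 2 with hr₀def
  have hr₀pos : 0 < r₀ := by positivity
  have hr0 : ∀ w : ℂ, w ≠ 0 → ‖w‖ ≤ r₀ → ‖Φ w / w - 1‖ < δ := by
    intro w hw hwle
    have h1 : dist w 0 < r₁ := by
      rw [Complex.dist_eq, sub_zero]
      rw [hr₀def] at hwle
      linarith
    have := hr₁ hw h1
    rwa [Complex.dist_eq] at this
  -- key local lemma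
  have hC1 : ∀ w : ℂ, w ≠ 0 → |Complex.arg w| ≤ β - ε → ‖w‖ ≤ r₀ →
      (Φ w ∈ polyBasin p ∧ ‖w‖ / 2 ≤ ‖Φ w‖) := by
    intro w hw hargw hwle
    have hu := hr0 w hw hwle
    set u : ℂ := Φ w / w with hudef
    obtain ⟨hu0, huabs, huarg⟩ := helper_arg_small u (lt_of_lt_of_le hu (by
      rw [hδdef]; exact min_le_left _ _))
    have hΦw : Φ w = w * u := by
      rw [hudef]
      field_simp
    have hΦw0 : Φ w ≠ 0 := by rw [hΦw]; exact mul_ne_zero hw hu0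
    have habsΦ : ‖Φ w‖ = ‖w‖ * ‖u‖ := by
      rw [hΦw, norm_mul]
    have hhalf : ‖w‖ / 2 ≤ ‖Φ w‖ := by
      rw [habsΦ]
      nlinarith [norm_nonneg w]
    have hargu : |Complex.arg u| < δ' := by
      have h2 : Real.pi * ‖u - 1‖ < Real.pi * δ :=
        mul_lt_mul_of_pos_left hu hπ
      linarith
    have hargΦ : |Complex.arg (Φ w)| < β := by
      by_cases hcase : β - ε < Real.pi
      · have hδ'2 : δ' ≤ ε := by rw [hδ'def, if_pos hcase]; exact min_le_left _ _
        have hδ'3 : δ' ≤ Real.pi - (β - ε) := by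
          rw [hδ'def, if_pos hcase]; exact min_le_right _ _
        have hsum : |Complex.arg w + Complex.arg u| < (β - ε) + δ' :=
          lt_of_le_of_lt (abs_add_le _ _) (add_lt_add_of_le_of_lt hargw hargu)
        have hsum' := abs_lt.mp hsum
        have hmul : Complex.arg (w * u) = Complex.arg w + Complex.arg u :=
          Complex.arg_mul hw hu0 ⟨by linarith, by linarith⟩
        rw [hΦw, hmul]
        have := abs_lt.mp hsum
        rw [abs_lt]
        constructor <;> linarith
      · push_neg at hcase
        exact lt_of_le_of_lt (Complex.abs_arg_le_pi _) (by linarith)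
    exact ⟨hW _ hΦw0 hargΦ, hhalf⟩
  -- decomposition
  have hdec : ∀ z : ℂ, ∃ n : ℕ, ‖z‖ ≤ r₀ * lam ^ n := by
    intro z
    obtain ⟨n, hn⟩ :=
      ((tendsto_pow_atTop_atTop_of_one_lt hlam).eventually_ge_atTop
        (‖z‖ / r₀)).exists
    refine ⟨n, ?_⟩
    rw [div_le_iff₀ hr₀pos] at hn
    linarith [hn]
  have hw_spec : ∀ (z : ℂ) (n : ℕ), z ≠ 0 →
      ∃ w : ℂ, w ≠ 0 ∧ Complex.arg w = Complex.arg z ∧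
        ‖w‖ = ‖z‖ / lam ^ n ∧
        Φ z = (fun v : ℂ => Polynomial.aeval v p)^[n] (Φ w) := by
    intro z n hz
    have hpowpos : (0:ℝ) < (lam ^ n)⁻¹ := inv_pos.mpr (pow_pos hlam0 n)
    refine ⟨(((lam ^ n)⁻¹ : ℝ) : ℂ) * z, ?_, ?_, ?_, ?_⟩
    · exact mul_ne_zero (by exact_mod_cast hpowpos.ne') hz
    · exact Complex.arg_real_mul z hpowpos
    · rw [norm_mul, Complex.norm_real, Real.norm_eq_abs, abs_of_pos hpowpos, div_eq_inv_mul]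
    · rw [← hiter n]
      congr 1
      have hl : ((lam:ℂ)) ^ n ≠ 0 := pow_ne_zero _ (by exact_mod_cast hlam0.ne')
      push_cast
      field_simp
  -- Φ is nonvanishing on the sector
  have hΦne : ∀ z : ℂ, z ≠ 0 → |Complex.arg z| ≤ β - ε → Φ z ≠ 0 := by
    intro z hz harg
    obtain ⟨n, hn⟩ := hdec z
    obtain ⟨w, hw0, hargw, habsw, hΦz⟩ := hw_spec z n hz
    have hwle : ‖w‖ ≤ r₀ := by
      rw [habsw, div_le_iff₀ (pow_pos hlam0 n)]
      linarith
    have hbasin := (hC1 w hw0 (by rw [hargw]; exact harg) hwle).1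
    rw [hΦz]
    exact helper_basin_ne p hc0 _ hbasin n
  -- Part 2
  have hpart2 : ∀ K : ℝ, 1 < K → ∃ C > (0:ℝ), ∀ z : ℂ, z ≠ 0 → |Complex.arg z| ≤ β - ε →
      C * ‖z‖ ^ K ≤ ‖Φ z‖ := by
    intro K hK
    set c : ℝ := lam ^ K with hcdef
    have hcpos : 0 < c := Real.rpow_pos_of_pos hlam0 K
    have hc1 : 1 ≤ c := Real.one_le_rpow hlam.le (by linarith)
    obtain ⟨M, hM1, hMgrow⟩ := helper_growth p d hd hdeg c hc1
    have hMpos : 0 < M := lt_of_lt_of_le one_pos hM1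
    -- the fundamental annulus and its image
    set T₁ : Set ℂ := {z : ℂ | ‖z‖ * Real.cos c₀ ≤ z.re ∧
        r₀ / lam ≤ ‖z‖ ∧ ‖z‖ ≤ r₀} with hT₁
    have hT₁c : IsCompact T₁ := helper_compact c₀ _ _
    have hT₁sub : ∀ z ∈ T₁, z ≠ 0 ∧ |Complex.arg z| ≤ β - ε := by
      intro z hz
      have hz0 : z ≠ 0 := by
        intro h
        rw [h] at hz
        have := hz.2.1
        simp only [norm_zero] at this
        have hpos : 0 < r₀ / lam := div_pos hr₀pos hlam0
        linarith
      exact ⟨hz0, le_trans ((helper_sector_iff c₀ hc₀pos.le hc₀π z hz0).mpr hz.1) hc₀βε⟩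
    have hK'c : IsCompact (Φ '' T₁) := hT₁c.image hΦ.continuous
    have hK'F : ∀ u ∈ Φ '' T₁, u ∈ polyBasin p := by
      rintro _ ⟨w, hw, rfl⟩
      obtain ⟨hw0, hargw⟩ := hT₁sub w hw
      exact (hC1 w hw0 hargw hw.2.2).1
    obtain ⟨N₀, hN₀⟩ := helper_escape p M c hc1 hMpos hMgrow _ hK'c hK'F
    -- the intermediate compact region
    set T₂ : Set ℂ := {z : ℂ | ‖z‖ * Real.cos c₀ ≤ z.re ∧
        r₀ ≤ ‖z‖ ∧ ‖z‖ ≤ r₀ * lam ^ N₀} with hT₂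
    have hT₂c : IsCompact T₂ := helper_compact c₀ _ _
    have hT₂ne : ((r₀ : ℝ) : ℂ) ∈ T₂ := by
      have h1 : ‖((r₀ : ℝ) : ℂ)‖ = r₀ := by
        rw [Complex.norm_real, Real.norm_eq_abs, abs_of_pos hr₀pos]
      refine ⟨?_, ?_, ?_⟩
      · rw [h1]
        simp only [Complex.ofReal_re]
        nlinarith [Real.cos_le_one c₀]
      · rw [h1]
      · rw [h1]
        nlinarith [one_le_pow₀ hlam.le (n := N₀)]
    obtain ⟨x₀, hx₀T, hx₀min⟩ := hT₂c.exists_isMinOn ⟨_, hT₂ne⟩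
      ((continuous_norm.comp hΦ.continuous).continuousOn)
    set m₁ : ℝ := ‖Φ x₀‖ with hm₁def
    have hx₀0 : x₀ ≠ 0 := by
      intro h
      rw [h] at hx₀T
      have := hx₀T.2.1
      simp only [norm_zero] at this
      linarith
    have hm₁ : 0 < m₁ := by
      apply norm_pos_iff.mpr
      exact hΦne x₀ hx₀0
        (le_trans ((helper_sector_iff c₀ hc₀pos.le hc₀π x₀ hx₀0).mpr hx₀T.1) hc₀βε)
    -- constants
    have hRK : (0:ℝ) ≤ K := by linarith
    set C₁ : ℝ := r₀ ^ (1 - K) / 2 with hC₁def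
    set C₂ : ℝ := m₁ / (r₀ * lam ^ N₀) ^ K with hC₂def
    set C₃ : ℝ := (c ^ N₀ * r₀ ^ K)⁻¹ with hC₃def
    have hC₁pos : 0 < C₁ := by
      rw [hC₁def]
      positivity
    have hbase₂ : (0:ℝ) < r₀ * lam ^ N₀ := by positivity
    have hC₂pos : 0 < C₂ := by
      rw [hC₂def]
      positivity
    have hC₃pos : 0 < C₃ := by
      rw [hC₃def]
      positivity
    refine ⟨min C₁ (min C₂ C₃), lt_min hC₁pos (lt_min hC₂pos hC₃pos), fun z hz hargz => ?_⟩
    have hzpos : 0 < ‖z‖ := norm_pos_iff.mpr hz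
    have hzKnn : (0:ℝ) ≤ ‖z‖ ^ K := Real.rpow_nonneg hzpos.le K
    rcases le_or_gt (‖z‖) r₀ with hcase | hcase
    · -- small z
      have hhalf := (hC1 z hz hargz hcase).2
      have h1 : r₀ ^ (1 - K) ≤ ‖z‖ ^ (1 - K) :=
        Real.rpow_le_rpow_of_nonpos hzpos hcase (by linarith)
      have h2 : ‖z‖ ^ (1 - K) * ‖z‖ ^ K = ‖z‖ := by
        rw [← Real.rpow_add hzpos]
        norm_num
      calc min C₁ (min C₂ C₃) * ‖z‖ ^ K ≤ C₁ * ‖z‖ ^ K :=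
            mul_le_mul_of_nonneg_right (min_le_left _ _) hzKnn
      _ ≤ (‖z‖ ^ (1 - K) / 2) * ‖z‖ ^ K := by
            apply mul_le_mul_of_nonneg_right _ hzKnn
            rw [hC₁def]
            linarith
      _ = ‖z‖ / 2 := by rw [div_mul_eq_mul_div, h2]
      _ ≤ _ := hhalf
    · -- large z
      set n : ℕ := Nat.find (hdec z) with hndef
      have hnspec : ‖z‖ ≤ r₀ * lam ^ n := Nat.find_spec (hdec z)
      have hnmin : ∀ m, m < n → ¬ (‖z‖ ≤ r₀ * lam ^ m) :=
        fun m hm => Nat.find_min (hdec z) hm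
      have hn1 : 1 ≤ n := by
        by_contra h
        push_neg at h
        interval_cases n
        simp only [pow_zero, mul_one] at hnspec
        linarith
      have hnmin' : r₀ * lam ^ (n - 1) < ‖z‖ := by
        have := hnmin (n - 1) (by omega)
        push_neg at this
        exact this
      obtain ⟨w, hw0, hargw, habsw, hΦz⟩ := hw_spec z n hz
      have hpowpos : (0:ℝ) < lam ^ n := pow_pos hlam0 n
      have hwle : ‖w‖ ≤ r₀ := by
        rw [habsw, div_le_iff₀ hpowpos]
        linarith
      have hwge : r₀ / lam ≤ ‖w‖ := by
        rw [habsw, div_le_div_iff₀ hlam0 hpowpos]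
        have hps : lam ^ n = lam ^ (n - 1) * lam := by
          rw [← pow_succ]
          congr 1
          omega
        rw [hps]
        nlinarith [pow_pos hlam0 (n - 1)]
      have hwT₁ : w ∈ T₁ := by
        refine ⟨?_, hwge, hwle⟩
        apply (helper_sector_iff c₀ hc₀pos.le hc₀π w hw0).mp
        rw [hargw]
        exact le_min hargz (Complex.abs_arg_le_pi z)
      rcases le_or_gt n N₀ with hnN | hnN
      · -- z in the intermediate region
        have hzT₂ : z ∈ T₂ := by
          refine ⟨?_, ?_, ?_⟩
          · apply (helper_sector_iff c₀ hc₀pos.le hc₀π z hz).mp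
            exact le_min hargz (Complex.abs_arg_le_pi z)
          · exact hcase.le
          · calc ‖z‖ ≤ r₀ * lam ^ n := hnspec
            _ ≤ r₀ * lam ^ N₀ :=
                mul_le_mul_of_nonneg_left (pow_le_pow_right₀ hlam.le hnN) hr₀pos.le
        have hmin : m₁ ≤ ‖Φ z‖ := hx₀min hzT₂
        have hzK : ‖z‖ ^ K ≤ (r₀ * lam ^ N₀) ^ K :=
          Real.rpow_le_rpow hzpos.le hzT₂.2.2 hRK
        calc min C₁ (min C₂ C₃) * ‖z‖ ^ K
            ≤ C₂ * ‖z‖ ^ K :=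
              mul_le_mul_of_nonneg_right ((min_le_right _ _).trans (min_le_left _ _)) hzKnn
        _ ≤ C₂ * (r₀ * lam ^ N₀) ^ K :=
              mul_le_mul_of_nonneg_left hzK hC₂pos.le
        _ = m₁ := by
              rw [hC₂def]
              field_simp
        _ ≤ _ := hmin
      · -- z far out
        have hesc := hN₀ _ ⟨w, hwT₁, rfl⟩
        have hiterge := helper_iter_ge p M c hc1 hMpos hMgrow _ hesc (n - N₀)
        have hPn : (fun v : ℂ => Polynomial.aeval v p)^[n] (Φ w)
            = (fun v : ℂ => Polynomial.aeval v p)^[n - N₀]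
              ((fun v : ℂ => Polynomial.aeval v p)^[N₀] (Φ w)) := by
          rw [← Function.iterate_add_apply]
          congr 1
          omega
        have hlow : c ^ (n - N₀) ≤ ‖Φ z‖ := by
          rw [hΦz, hPn]
          calc c ^ (n - N₀) = c ^ (n - N₀) * 1 := (mul_one _).symm
          _ ≤ c ^ (n - N₀) * M := by
                apply mul_le_mul_of_nonneg_left hM1
                positivity
          _ ≤ _ := hiterge
        have hck : ((lam : ℝ) ^ n) ^ K = c ^ n := by
          rw [hcdef, ← Real.rpow_natCast_mul hlam0.le,
            ← Real.rpow_natCast (lam ^ K) n, ← Real.rpow_mul hlam0.le]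
          ring_nf
        have hzK : ‖z‖ ^ K ≤ r₀ ^ K * c ^ n := by
          calc ‖z‖ ^ K ≤ (r₀ * lam ^ n) ^ K :=
                Real.rpow_le_rpow hzpos.le hnspec hRK
          _ = r₀ ^ K * (lam ^ n) ^ K := Real.mul_rpow hr₀pos.le hpowpos.le
          _ = r₀ ^ K * c ^ n := by rw [hck]
        have hcsplit : c ^ n = c ^ N₀ * c ^ (n - N₀) := by
          rw [← pow_add]
          congr 1
          omega
        calc min C₁ (min C₂ C₃) * ‖z‖ ^ K
            ≤ C₃ * ‖z‖ ^ K :=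
              mul_le_mul_of_nonneg_right ((min_le_right _ _).trans (min_le_right _ _)) hzKnn
        _ ≤ C₃ * (r₀ ^ K * c ^ n) := mul_le_mul_of_nonneg_left hzK hC₃pos.le
        _ = c ^ (n - N₀) := by
              rw [hC₃def, hcsplit]
              have h1 : (0:ℝ) < c ^ N₀ := by positivity
              have h2 : (0:ℝ) < r₀ ^ K := Real.rpow_pos_of_pos hr₀pos K
              field_simp
        _ ≤ _ := hlow
  -- Part 1 from Part 2
  refine ⟨?_, hpart2⟩
  intro R
  obtain ⟨C, hC, h2⟩ := hpart2 2 one_lt_two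
  refine ⟨max 1 ((|R| + 1) / C), fun z hz hargz hrz => ?_⟩
  have h1 : 1 ≤ ‖z‖ := le_trans (le_max_left _ _) hrz
  have h2' : (|R| + 1) / C ≤ ‖z‖ := le_trans (le_max_right _ _) hrz
  rw [div_le_iff₀ hC] at h2'
  have hmain := h2 z hz hargz
  have hsq : ‖z‖ ^ (2:ℝ) = ‖z‖ ^ (2:ℕ) := by
    rw [← Real.rpow_natCast]
    norm_num
  rw [hsq] at hmain
  rw [mul_comm] at h2'
  have h3 : (|R| + 1) * ‖z‖ ≤ C * ‖z‖ * ‖z‖ :=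
    mul_le_mul_of_nonneg_right h2' (by linarith)
  have h4 : |R| + 1 ≤ (|R| + 1) * ‖z‖ :=
    le_mul_of_one_le_right (by positivity) h1
  have h5 : C * ‖z‖ * ‖z‖ = C * ‖z‖ ^ (2:ℕ) := by ring
  linarith [le_abs_self R]
end

section
/- If the basin of attraction F_∞ of ∞ of p contains the angular region W_β for some β > 0, then Φ has no zeros in W_β, i.e. Φ(z) ≠ 0 for every z ∈ ℂ \ {0} with |arg z| < β. -/
open Filter Topology

lemma abs_arg_eq_arccos (u : ℂ) (hu : u ≠ 0) :
    |Complex.arg u| = Real.arccos (u.re / ‖u‖) := by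
  rw [← Complex.cos_arg hu, ← Real.cos_abs,
    Real.arccos_cos (abs_nonneg _) (Complex.abs_arg_le_pi u)]

/-- If the basin of attraction of `∞` of `p` contains the angular region
`W_β` for some `β > 0`, then `Φ` has no zeros in `W_β`. -/
theorem poincare_function_no_zeros_in_sector
    (p : Polynomial ℝ) (d : ℕ) (lam : ℝ)
    (hd : 2 ≤ d) (hdeg : p.natDegree = d)
    (hc0 : p.coeff 0 = 0) (hc1 : p.coeff 1 = lam) (hlam : 1 < lam)
    (Φ : ℂ → ℂ) (hΦ : Differentiable ℂ Φ)
    (hfe : ∀ z : ℂ, Φ (lam * z) = Polynomial.aeval (Φ z) p)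
    (hΦ0 : Φ 0 = 0) (hΦ'0 : deriv Φ 0 = 1)
    (β : ℝ) (hβ : 0 < β)
    (hW : ∀ z : ℂ, z ≠ 0 → |Complex.arg z| < β → z ∈ polyBasin p) :
    ∀ z : ℂ, z ≠ 0 → |Complex.arg z| < β → Φ z ≠ 0 := by
  intro z hz hargz hzero
  have hlam0 : (0:ℝ) < lam := lt_trans one_pos hlam
  have hlamC : (lam:ℂ) ≠ 0 := by exact_mod_cast hlam0.ne'
  set f : ℂ → ℂ := fun w : ℂ => Polynomial.aeval w p with hf
  have p0 : f 0 = 0 := by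
    simp [hf, Polynomial.aeval_def, Polynomial.eval₂_at_zero, hc0]
  -- iteration formula
  have hiter : ∀ (w : ℂ) (n : ℕ), Φ ((lam:ℂ)^n * w) = f^[n] (Φ w) := by
    intro w n
    induction n with
    | zero => simp
    | succ n ih =>
      rw [Function.iterate_succ_apply', ← ih]
      show Φ (↑lam ^ (n + 1) * w) = Polynomial.aeval (Φ (↑lam ^ n * w)) p
      rw [← hfe]
      congr 1
      ring
  -- slope limit
  have hd1 : HasDerivAt Φ 1 0 := by
    have h := (hΦ 0).hasDerivAt
    rwa [hΦ'0] at h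
  have hslope : Tendsto (fun w => Φ w / w) (𝓝[≠] (0:ℂ)) (𝓝 1) := by
    have h := hasDerivAt_iff_tendsto_slope.mp hd1
    simpa [slope_fun_def, hΦ0, div_eq_inv_mul] using h
  set w : ℕ → ℂ := fun n => ((lam:ℂ)⁻¹)^n * z with hwdef
  have hwne : ∀ n, w n ≠ 0 := fun n =>
    mul_ne_zero (pow_ne_zero _ (inv_ne_zero hlamC)) hz
  have hwlim : Tendsto w atTop (𝓝 0) := by
    have hnorm : ‖(lam:ℂ)⁻¹‖ < 1 := by
      rw [norm_inv, Complex.norm_real, Real.norm_eq_abs, abs_of_pos hlam0]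
      exact inv_lt_one_of_one_lt₀ hlam
    rw [hwdef]
    simpa [inv_pow] using (tendsto_pow_atTop_nhds_zero_of_norm_lt_one hnorm).mul_const z
  have hw0 : Tendsto w atTop (𝓝[≠] 0) :=
    tendsto_nhdsWithin_of_tendsto_nhds_of_eventually_within _ hwlim
      (Eventually.of_forall hwne)
  set c : ℕ → ℂ := fun n => Φ (w n) / w n with hcdef
  have hc : Tendsto c atTop (𝓝 1) := hslope.comp hw0
  have hΦw : ∀ n, Φ (w n) = (((lam⁻¹ : ℝ)^n : ℝ) : ℂ) * (z * c n) := by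
    intro n
    calc Φ (w n) = c n * w n := (div_mul_cancel₀ _ (hwne n)).symm
    _ = _ := by push_cast; rw [hwdef]; ring
  -- z * c n tends to z
  have hzc : Tendsto (fun n => z * c n) atTop (𝓝 z) := by
    simpa using tendsto_const_nhds.mul hc
  have hcne : ∀ᶠ n in atTop, c n ≠ 0 := hc.eventually_ne one_ne_zero
  have hcont : ContinuousAt (fun u : ℂ => Real.arccos (u.re / ‖u‖)) z := by
    apply Real.continuous_arccos.continuousAt.comp
    exact (Complex.continuous_re.continuousAt).div
      (continuous_norm.continuousAt) (by simpa using hz)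
  have harccos : Tendsto (fun n => Real.arccos ((z * c n).re / ‖z * c n‖))
      atTop (𝓝 (Real.arccos (z.re / ‖z‖))) := hcont.tendsto.comp hzc
  have hlt : ∀ᶠ n in atTop,
      Real.arccos ((z * c n).re / ‖z * c n‖) < β := by
    apply harccos.eventually_lt_const
    rwa [← abs_arg_eq_arccos z hz]
  obtain ⟨n, hn1, hn2⟩ := (hcne.and hlt).exists
  set u : ℂ := Φ (w n) with hudef
  have hzcne : z * c n ≠ 0 := mul_ne_zero hz hn1
  have hrpos : (0:ℝ) < (lam⁻¹)^n := pow_pos (inv_pos.mpr hlam0) n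
  have hune : u ≠ 0 := by
    rw [hudef, hΦw n]
    exact mul_ne_zero (by exact_mod_cast hrpos.ne') hzcne
  have hargu : |Complex.arg u| < β := by
    rw [hudef, hΦw n, Complex.arg_real_mul _ hrpos, abs_arg_eq_arccos _ hzcne]
    exact hn2
  -- the n-th iterate of u is 0
  have hfn0 : f^[n] u = 0 := by
    have h := hiter (w n) n
    rw [hwdef] at h
    have hcancel : (lam:ℂ)^n * (((lam:ℂ)⁻¹)^n * z) = z := by
      rw [← mul_assoc, ← mul_pow, mul_inv_cancel₀ hlamC, one_pow, one_mul]
    rw [hcancel] at h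
    rw [hudef, hwdef, ← h, hzero]
  have hall0 : ∀ m, n ≤ m → f^[m] u = 0 := by
    intro m hmn
    have hm : m = (m - n) + n := (Nat.sub_add_cancel hmn).symm
    rw [hm, Function.iterate_add_apply, hfn0, Function.iterate_fixed p0]
  have hB := hW u hune hargu
  have h1 : ∀ᶠ m in atTop, 1 ≤ ‖f^[m] u‖ := hB.eventually_ge_atTop 1
  obtain ⟨m, hm1, hmn⟩ := (h1.and (eventually_ge_atTop n)).exists
  rw [hall0 m hmn] at hm1
  simp at hm1
  linarith
end

section
/- Suppose a_d > 0 and the basin of attraction F_∞ of ∞ of p contains W_β for some β > 0, and let F be the 1-periodic holomorphic function of Theorem 1. Then for every z ∈ ℂ \ {0} with Φ(z) ∈ F_∞, the limit lim_{n→∞} Log(Φ(λⁿ z)) / (dⁿ · z^ρ) exists (Log denoting the principal logarithm, defined for all large n since Φ(λⁿz) → ∞, and z^ρ = exp(ρ·Log z)); moreover, for every z ∈ W_β with Φ(z) ∈ F_∞ this limit equals F(log z / log λ). In particular, the limit furnishes the analytic continuation of z ↦ F(log z / log λ) to Φ^{(−1)}(F_∞). -/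
open Filter Topology

open Polynomial

lemma aux_eval_bound (q : Polynomial ℂ) (m : ℕ) (hm : q.natDegree < m + 1) (w : ℂ)
    (hw : 1 ≤ ‖w‖) :
    ‖q.eval w‖
      ≤ (∑ i ∈ Finset.range (m + 1), ‖q.coeff i‖) * ‖w‖ ^ m := by
  rw [eval_eq_sum_range' hm, Finset.sum_mul]
  refine (norm_sum_le _ _).trans (Finset.sum_le_sum fun i hi => ?_)
  rw [norm_mul, norm_pow]
  exact mul_le_mul_of_nonneg_left
    (pow_le_pow_right₀ hw (Nat.lt_succ_iff.mp (Finset.mem_range.mp hi)))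
    (norm_nonneg _)

set_option maxHeartbeats 1000000 in
lemma aux_log_est (P : Polynomial ℂ) (d : ℕ) (hd : 2 ≤ d) (hdeg : P.natDegree = d)
    (a : ℝ) (ha : 0 < a) (hlc : P.leadingCoeff = (a : ℂ)) :
    ∃ R C : ℝ, 1 ≤ R ∧ 0 ≤ C ∧ ∀ w : ℂ, R ≤ ‖w‖ →
      ‖Complex.log (P.eval w) - (d : ℂ) * Complex.log w‖ ≤ C := by
  classical
  set m := d - 1 with hm
  have hdm : d = m + 1 := by omega
  set S := ∑ i ∈ Finset.range (m + 1), ‖P.eraseLead.coeff i‖ with hS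
  have hS0 : 0 ≤ S := Finset.sum_nonneg fun _ _ => norm_nonneg _
  set C₁ : ℝ := max |Real.log (a / 2)| |Real.log (a + S)| with hC₁
  have hC₁0 : 0 ≤ C₁ := le_trans (abs_nonneg _) (le_max_left _ _)
  refine ⟨max 1 (2 * (S + 1) / a), C₁ + (d + 1) * Real.pi, le_max_left _ _,
    by positivity, ?_⟩
  intro w hw
  have hw1 : (1 : ℝ) ≤ ‖w‖ := le_trans (le_max_left _ _) hw
  have hwpos : (0 : ℝ) < ‖w‖ := lt_of_lt_of_le one_pos hw1
  have hw0 : w ≠ 0 := by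
    intro h; rw [h] at hwpos; simp at hwpos
  have hw2 : 2 * (S + 1) / a ≤ ‖w‖ := le_trans (le_max_right _ _) hw
  have hEL : ‖P.eraseLead.eval w‖ ≤ S * ‖w‖ ^ m := by
    refine aux_eval_bound _ _ ?_ _ hw1
    have := P.eraseLead_natDegree_le
    omega
  have hsplit : P.eval w = P.eraseLead.eval w + (a : ℂ) * w ^ d := by
    conv_lhs => rw [← P.eraseLead_add_C_mul_X_pow]
    simp [hlc, hdeg]
  have hpowpos : (0:ℝ) < ‖w‖ ^ m := pow_pos hwpos m
  have hpowd : ‖w‖ ^ d = ‖w‖ ^ m * ‖w‖ := by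
    rw [hdm, pow_succ]
  have habs_awd : ‖(a : ℂ) * w ^ d‖ = a * ‖w‖ ^ d := by
    rw [norm_mul, norm_pow, Complex.norm_real, Real.norm_eq_abs, abs_of_pos ha]
  have haw : 2 * (S + 1) ≤ a * ‖w‖ := by
    rw [div_le_iff₀ ha] at hw2; linarith [hw2]
  have hkey : S * ‖w‖ ^ m ≤ a / 2 * ‖w‖ ^ d := by
    rw [hpowd]
    nlinarith [mul_nonneg hpowpos.le (by linarith : (0:ℝ) ≤ a * ‖w‖ - 2 * S)]
  have hlow : a / 2 * ‖w‖ ^ d ≤ ‖P.eval w‖ := by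
    have h1 : a * ‖w‖ ^ d
        ≤ ‖P.eval w‖ + ‖P.eraseLead.eval w‖ := by
      calc a * ‖w‖ ^ d = ‖(a : ℂ) * w ^ d‖ := habs_awd.symm
        _ = ‖P.eval w - P.eraseLead.eval w‖ := by rw [hsplit]; ring_nf
        _ ≤ ‖P.eval w‖ + ‖P.eraseLead.eval w‖ := by
            exact norm_sub_le (P.eval w) (P.eraseLead.eval w)
    linarith [hEL, hkey]
  have hup : ‖P.eval w‖ ≤ (a + S) * ‖w‖ ^ d := by
    have h2 : ‖P.eval w‖
        ≤ ‖P.eraseLead.eval w‖ + ‖(a:ℂ) * w ^ d‖ := by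
      rw [hsplit]; exact norm_add_le _ _
    have h3 : ‖w‖ ^ m ≤ ‖w‖ ^ d :=
      pow_le_pow_right₀ hw1 (by omega)
    rw [habs_awd] at h2
    nlinarith [hEL, h3]
  have hPne : ‖P.eval w‖ > 0 := lt_of_lt_of_le (by positivity) hlow
  -- real part bound
  have hlog_low : Real.log (a / 2) + d * Real.log (‖w‖)
      ≤ Real.log (‖P.eval w‖) := by
    have := Real.log_le_log (by positivity) hlow
    rwa [Real.log_mul (by positivity) (by positivity), Real.log_pow] at this
  have hlog_up : Real.log (‖P.eval w‖)
      ≤ Real.log (a + S) + d * Real.log (‖w‖) := by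
    have := Real.log_le_log hPne hup
    rwa [Real.log_mul (by linarith : (0:ℝ) < a + S).ne' (by positivity : (0:ℝ) < ‖w‖ ^ d).ne', Real.log_pow] at this
  set ζ := Complex.log (P.eval w) - (d : ℂ) * Complex.log w with hζ
  have hre : ζ.re = Real.log (‖P.eval w‖) - d * Real.log (‖w‖) := by
    simp [hζ, Complex.log_re]
  have him : ζ.im = (P.eval w).arg - d * w.arg := by
    simp [hζ, Complex.log_im]
  have hre_bound : |ζ.re| ≤ C₁ := by
    rw [hre, abs_le]
    constructor
    · have := neg_abs_le (Real.log (a / 2))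
      have := le_max_left |Real.log (a / 2)| |Real.log (a + S)|
      linarith
    · have := le_abs_self (Real.log (a + S))
      have := le_max_right |Real.log (a / 2)| |Real.log (a + S)|
      linarith
  have him_bound : |ζ.im| ≤ (d + 1) * Real.pi := by
    rw [him]
    have h1 : |(P.eval w).arg| ≤ Real.pi := Complex.abs_arg_le_pi _
    have h2 : |w.arg| ≤ Real.pi := Complex.abs_arg_le_pi _
    calc |(P.eval w).arg - d * w.arg| ≤ |(P.eval w).arg| + |(d:ℝ) * w.arg| := abs_sub _ _
      _ = |(P.eval w).arg| + d * |w.arg| := by rw [abs_mul, Nat.abs_cast]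
      _ ≤ Real.pi + d * Real.pi := by
          have : (d:ℝ) * |w.arg| ≤ d * Real.pi :=
            mul_le_mul_of_nonneg_left h2 (Nat.cast_nonneg d)
          linarith
      _ = (d + 1) * Real.pi := by ring
  calc ‖ζ‖ ≤ |ζ.re| + |ζ.im| := Complex.norm_le_abs_re_add_abs_im ζ
    _ ≤ C₁ + (d + 1) * Real.pi := add_le_add hre_bound him_bound

lemma aux_conv (P : Polynomial ℂ) (d : ℕ) (hd : 2 ≤ d) (R C : ℝ) (hR : 1 ≤ R) (hC : 0 ≤ C)
    (hest : ∀ w : ℂ, R ≤ ‖w‖ →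
      ‖Complex.log (P.eval w) - (d : ℂ) * Complex.log w‖ ≤ C)
    (w₀ : ℂ)
    (hbasin : Tendsto (fun n : ℕ => ‖(fun w : ℂ => P.eval w)^[n] w₀‖) atTop atTop) :
    ∃ L₀ : ℂ, Tendsto (fun n : ℕ => Complex.log ((fun w : ℂ => P.eval w)^[n] w₀) / (d : ℂ) ^ n)
      atTop (nhds L₀) := by
  set W : ℕ → ℂ := fun n => (fun w : ℂ => P.eval w)^[n] w₀ with hWdef
  have hWsucc : ∀ n, W (n + 1) = P.eval (W n) := fun n =>
    Function.iterate_succ_apply' _ _ _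
  have hd0 : (0:ℝ) < d := by positivity
  have hd1 : (1:ℝ) < d := by exact_mod_cast lt_of_lt_of_le one_lt_two (by exact_mod_cast hd)
  have hdC : ((d:ℂ)) ≠ 0 := by
    simp only [ne_eq, Nat.cast_eq_zero]; omega
  obtain ⟨N, hN⟩ := eventually_atTop.mp (hbasin.eventually_ge_atTop R)
  set u : ℕ → ℂ := fun n => Complex.log (W n) / (d : ℂ) ^ n with hu
  have key : ∀ n, N ≤ n → dist (u n) (u (n + 1)) ≤ C / (d:ℝ) ^ (n + 1) := by
    intro n hn
    have hWn : R ≤ ‖W n‖ := hN n hn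
    have hdiff : u n - u (n + 1)
        = ((d : ℂ) * Complex.log (W n) - Complex.log (W (n + 1))) / (d : ℂ) ^ (n + 1) := by
      rw [hu]
      field_simp
      ring
    rw [dist_eq_norm, hdiff]
    rw [norm_div]
    have h1 : ‖(d : ℂ) * Complex.log (W n) - Complex.log (W (n + 1))‖ ≤ C := by
      rw [← norm_neg]
      have : -((d : ℂ) * Complex.log (W n) - Complex.log (W (n + 1)))
          = Complex.log (P.eval (W n)) - (d : ℂ) * Complex.log (W n) := by
        rw [hWsucc n]; ring
      rw [this]
      exact hest (W n) hWn
    have h2 : ‖((d : ℂ)) ^ (n + 1)‖ = (d:ℝ) ^ (n + 1) := by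
      rw [norm_pow]
      simp
    rw [h2]
    exact (div_le_div_iff_of_pos_right (by positivity)).mpr h1
  have hcauchy : CauchySeq (fun n => u (n + N)) := by
    refine cauchySeq_of_le_geometric ((d:ℝ)⁻¹) C (by
      rw [inv_lt_one_iff₀]; right; exact hd1) ?_
    intro n
    have h1 : dist (u (n + N)) (u (n + N + 1)) ≤ C / (d:ℝ) ^ (n + N + 1) :=
      key (n + N) (by omega)
    have h2 : C / (d:ℝ) ^ (n + N + 1) ≤ C * ((d:ℝ)⁻¹) ^ n := by
      rw [inv_pow, ← div_eq_mul_inv]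
      exact div_le_div_of_nonneg_left hC (by positivity)
        (pow_le_pow_right₀ (by linarith) (by omega))
    have h3 : u (n + 1 + N) = u (n + N + 1) := by norm_num [Nat.add_right_comm]
    rw [h3]
    exact h1.trans h2
  obtain ⟨L₀, hL₀⟩ := cauchySeq_tendsto_of_complete hcauchy
  exact ⟨L₀, (tendsto_add_atTop_iff_nat N).mp hL₀⟩

set_option maxHeartbeats 1000000 in
/-- Corollary 1 of the paper. For every `z ≠ 0` with `Φ(z)` in the basin of
attraction of `∞`, the limit `lim_{n→∞} Log Φ(λⁿz)/(dⁿ z^ρ)` exists; for `z ∈ W_β` with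
`Φ(z) ∈ F_∞` it equals `F(log z/log λ)`.  Thus the limit furnishes the analytic continuation
of `z ↦ F(log z / log λ)` to `Φ⁻¹(F_∞)`. -/
theorem poincare_limit_analytic_continuation
    (p : Polynomial ℝ) (d : ℕ) (lam : ℝ)
    (hd : 2 ≤ d) (hdeg : p.natDegree = d)
    (hc0 : p.coeff 0 = 0) (hc1 : p.coeff 1 = lam) (hlam : 1 < lam)
    (had : 0 < p.leadingCoeff)
    (Φ : ℂ → ℂ) (hΦ : Differentiable ℂ Φ)
    (hfe : ∀ z : ℂ, Φ (lam * z) = Polynomial.aeval (Φ z) p)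
    (hΦ0 : Φ 0 = 0) (hΦ'0 : deriv Φ 0 = 1)
    (β : ℝ) (hβ : 0 < β)
    (hW : ∀ z : ℂ, z ≠ 0 → |Complex.arg z| < β → z ∈ polyBasin p)
    -- `F` is the 1-periodic holomorphic function of Theorem 1:
    (F : ℂ → ℂ)
    (hF : DifferentiableOn ℂ F {w : ℂ | |w.im| < β / Real.log lam})
    (hFper : ∀ w : ℂ, |w.im| < β / Real.log lam → F (w + 1) = F w)
    (hFasymp : ∀ ε : ℝ, 0 < ε → ε < β → ∀ M : ℝ, 0 < M → ∀ δ : ℝ, 0 < δ → ∃ R : ℝ,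
      ∀ z : ℂ, z ≠ 0 → |Complex.arg z| ≤ β - ε → R ≤ ‖z‖ →
        ‖Complex.log (Φ z)
            - (z ^ ((Real.log d / Real.log lam : ℝ) : ℂ)
                  * F (Complex.log z / (Real.log lam : ℂ))
                - (Real.log p.leadingCoeff : ℂ) / ((d : ℂ) - 1))‖
          ≤ δ * ‖z‖ ^ (-M)) :
    ∀ z : ℂ, z ≠ 0 → Φ z ∈ polyBasin p →
      ∃ L : ℂ,
        Tendsto (fun n : ℕ =>
            Complex.log (Φ ((lam : ℂ) ^ n * z))
              / ((d : ℂ) ^ n * z ^ ((Real.log d / Real.log lam : ℝ) : ℂ)))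
          atTop (nhds L) ∧
        (|Complex.arg z| < β → L = F (Complex.log z / (Real.log lam : ℂ))) := by
  intro z hz hbasin
  have hlam0 : (0:ℝ) < lam := lt_trans one_pos hlam
  have hloglam : (0:ℝ) < Real.log lam := Real.log_pos hlam
  have hd2 : (2:ℝ) ≤ (d:ℝ) := by exact_mod_cast hd
  have hd1 : (1:ℝ) < (d:ℝ) := by linarith
  have hdpos : (0:ℝ) < (d:ℝ) := by linarith
  have hzρ : z ^ ((Real.log d / Real.log lam : ℝ) : ℂ) ≠ 0 := by
    rw [Complex.cpow_def_of_ne_zero hz]; exact Complex.exp_ne_zero _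
  set ρ : ℝ := Real.log d / Real.log lam with hρ
  set P : Polynomial ℂ := p.map (algebraMap ℝ ℂ) with hP
  have hPeval : ∀ w : ℂ, (Polynomial.aeval w p : ℂ) = P.eval w := by
    intro w; rw [Polynomial.aeval_def, hP, Polynomial.eval_map]
  have hiter : ∀ n : ℕ, Φ ((lam:ℂ) ^ n * z)
      = (fun w : ℂ => Polynomial.aeval w p)^[n] (Φ z) := by
    intro n
    induction n with
    | zero => simp
    | succ n ih =>
      have h1 : (lam:ℂ) ^ (n+1) * z = (lam:ℂ) * ((lam:ℂ) ^ n * z) := by ring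
      rw [h1, hfe, ih, Function.iterate_succ_apply']
  by_cases hb : |Complex.arg z| < β
  · -- sector case
    refine ⟨F (Complex.log z / (Real.log lam : ℂ)), ?_, fun _ => rfl⟩
    set w : ℂ := Complex.log z / (Real.log lam : ℂ) with hw
    set c : ℂ := (Real.log p.leadingCoeff : ℂ) / ((d : ℂ) - 1) with hc
    set ε : ℝ := (β - |Complex.arg z|) / 2 with hε
    have hargnn : (0:ℝ) ≤ |Complex.arg z| := abs_nonneg _
    have hε0 : 0 < ε := by rw [hε]; linarith
    have hεβ : ε < β := by rw [hε]; linarith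
    obtain ⟨R, hR⟩ := hFasymp ε hε0 hεβ 1 one_pos 1 one_pos
    have hlogC : ((Real.log lam : ℝ) : ℂ) ≠ 0 := by
      exact_mod_cast hloglam.ne'
    have hwim : |w.im| < β / Real.log lam := by
      have h1 : w.im = Complex.arg z / Real.log lam := by
        rw [hw, Complex.div_ofReal_im, Complex.log_im]
      rw [h1, abs_div, abs_of_pos hloglam]
      exact (div_lt_div_iff_of_pos_right hloglam).mpr hb
    have hshift : ∀ n : ℕ, F (w + n) = F w := by
      intro n; induction n with
      | zero => simp
      | succ n ih =>
        have h1 : w + ((n+1 : ℕ) : ℂ) = (w + n) + 1 := by push_cast; ring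
        rw [h1, hFper (w + n) (by simpa using hwim), ih]
    have hlamn : ∀ n : ℕ, ((lam:ℂ) ^ n) = ((lam ^ n : ℝ) : ℂ) := by
      intro n; push_cast; ring
    have hne : ∀ n : ℕ, (lam:ℂ) ^ n * z ≠ 0 := fun n =>
      mul_ne_zero (pow_ne_zero _ (by exact_mod_cast hlam0.ne')) hz
    have hlog : ∀ n : ℕ, Complex.log ((lam:ℂ) ^ n * z)
        = (((n : ℝ) * Real.log lam : ℝ) : ℂ) + Complex.log z := by
      intro n
      rw [hlamn n, Complex.log_ofReal_mul (pow_pos hlam0 n) hz, Real.log_pow]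
    have hdivlog : ∀ n : ℕ, Complex.log ((lam:ℂ) ^ n * z) / ((Real.log lam : ℝ) : ℂ)
        = w + n := by
      intro n
      rw [hlog n, hw]
      push_cast
      field_simp
      ring
    have hcpow : ∀ n : ℕ, ((lam:ℂ) ^ n * z) ^ ((ρ : ℝ) : ℂ)
        = (d:ℂ) ^ n * z ^ ((ρ : ℝ) : ℂ) := by
      intro n
      rw [Complex.cpow_def_of_ne_zero (hne n), Complex.cpow_def_of_ne_zero hz, hlog n,
        add_mul, Complex.exp_add]
      congr 1
      have h1 : ((n : ℝ) * Real.log lam) * ρ = (n : ℝ) * Real.log d := by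
        rw [hρ]; field_simp
      rw [← Complex.ofReal_mul, h1, ← Complex.ofReal_exp, Real.exp_nat_mul,
        Real.exp_log hdpos]
      norm_cast
    have habs : ∀ n : ℕ, ‖(lam:ℂ) ^ n * z‖ = lam ^ n * ‖z‖ := by
      intro n; rw [norm_mul, norm_pow, Complex.norm_real, Real.norm_eq_abs, abs_of_pos hlam0]
    have hz0 : 0 < ‖z‖ := norm_pos_iff.mpr hz
    have hgrow : Tendsto (fun n : ℕ => lam ^ n * ‖z‖) atTop atTop :=
      (tendsto_pow_atTop_atTop_of_one_lt hlam).atTop_mul_const hz0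
    have hev : ∀ᶠ n : ℕ in atTop, max R 1 ≤ lam ^ n * ‖z‖ :=
      hgrow.eventually_ge_atTop _
    rw [← tendsto_sub_nhds_zero_iff]
    have hzρpos : 0 < ‖z ^ ((ρ : ℝ) : ℂ)‖ := norm_pos_iff.mpr hzρ
    refine squeeze_zero_norm'
      (a := fun n : ℕ => (1 + ‖c‖) * ((d:ℝ) ^ n * ‖z ^ ((ρ:ℝ):ℂ)‖)⁻¹)
      ?_ ?_
    · filter_upwards [hev] with n hn
      have hz'abs : R ≤ ‖(lam:ℂ) ^ n * z‖ := by
        rw [habs]; exact le_trans (le_max_left _ _) hn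
      have hz'1 : (1:ℝ) ≤ ‖(lam:ℂ) ^ n * z‖ := by
        rw [habs]; exact le_trans (le_max_right _ _) hn
      have harg : |Complex.arg ((lam:ℂ) ^ n * z)| ≤ β - ε := by
        rw [hlamn n, Complex.arg_real_mul z (pow_pos hlam0 n), hε]
        linarith
      have hest := hR ((lam:ℂ) ^ n * z) (hne n) harg hz'abs
      rw [hcpow n, hdivlog n, hshift n] at hest
      set D : ℂ := (d:ℂ) ^ n * z ^ ((ρ:ℝ):ℂ) with hD
      have hDne : D ≠ 0 := mul_ne_zero (pow_ne_zero _ (by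
        simp only [ne_eq, Nat.cast_eq_zero]; omega)) hzρ
      have hDpos : 0 < ‖D‖ := norm_pos_iff.mpr hDne
      have hDabs : ‖D‖ = (d:ℝ) ^ n * ‖z ^ ((ρ:ℝ):ℂ)‖ := by
        rw [hD, norm_mul, norm_pow, Complex.norm_natCast]
      have h4 : ‖Complex.log (Φ ((lam:ℂ) ^ n * z)) - (D * F w - c)‖ ≤ 1 := by
        refine hest.trans ?_
        rw [one_mul]
        exact Real.rpow_le_one_of_one_le_of_nonpos hz'1 (by norm_num)
      have hgsub : Complex.log (Φ ((lam:ℂ) ^ n * z)) / D - F w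
          = (Complex.log (Φ ((lam:ℂ) ^ n * z)) - (D * F w - c)) / D - c / D := by
        field_simp
        ring
      calc ‖Complex.log (Φ ((lam:ℂ) ^ n * z)) / D - F w‖
          = ‖(Complex.log (Φ ((lam:ℂ) ^ n * z)) - (D * F w - c)) / D - c / D‖ := by
            rw [hgsub]
        _ ≤ ‖(Complex.log (Φ ((lam:ℂ) ^ n * z)) - (D * F w - c)) / D‖
            + ‖c / D‖ := by
            exact norm_sub_le
              ((Complex.log (Φ ((lam:ℂ) ^ n * z)) - (D * F w - c)) / D) (c / D)
        _ = (‖Complex.log (Φ ((lam:ℂ) ^ n * z)) - (D * F w - c)‖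
              + ‖c‖) / ‖D‖ := by
            rw [norm_div, norm_div, ← add_div]
        _ ≤ (1 + ‖c‖) / ‖D‖ := by
            refine (div_le_div_iff_of_pos_right hDpos).mpr ?_
            linarith
        _ = (1 + ‖c‖) * ((d:ℝ) ^ n * ‖z ^ ((ρ:ℝ):ℂ)‖)⁻¹ := by
            rw [hDabs, div_eq_mul_inv]
    · have h1 : Tendsto (fun n : ℕ => (d:ℝ) ^ n * ‖z ^ ((ρ:ℝ):ℂ)‖) atTop atTop :=
        (tendsto_pow_atTop_atTop_of_one_lt hd1).atTop_mul_const hzρpos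
      have h2 := (h1.inv_tendsto_atTop).const_mul (1 + ‖c‖)
      simpa using h2
  · -- general case
    have hPdeg : P.natDegree = d := by
      rw [hP, Polynomial.natDegree_map]; exact hdeg
    have hPlc : P.leadingCoeff = ((p.leadingCoeff : ℝ) : ℂ) := by
      rw [hP, Polynomial.leadingCoeff_map]; rfl
    obtain ⟨R, C, hR1, hC0, hest⟩ := aux_log_est P d hd hPdeg p.leadingCoeff had hPlc
    have hfun : (fun w : ℂ => (Polynomial.aeval w p : ℂ)) = fun w => P.eval w :=
      funext hPeval
    have hbasin' : Tendsto (fun n : ℕ => ‖(fun w : ℂ => P.eval w)^[n] (Φ z)‖)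
        atTop atTop := by
      rw [← hfun]; exact hbasin
    obtain ⟨L₀, hL₀⟩ := aux_conv P d hd R C hR1 hC0 hest (Φ z) hbasin'
    refine ⟨L₀ * (z ^ ((ρ:ℝ):ℂ))⁻¹, ?_, fun h => absurd h hb⟩
    refine (hL₀.mul_const ((z ^ ((ρ:ℝ):ℂ))⁻¹)).congr fun n => ?_
    rw [hiter n, hfun]
    ring
end

section
/- Let w, z ∈ ℂ. (i) If (z_n)_{n≥0} is a sequence of complex numbers with z_0 = w and p(z_{n+1}) = z_n for all n ≥ 0, and if the sequence (λⁿ·z_n) converges to z, then Φ(z) = w. (ii) Conversely, if Φ(z) = w, then the sequence z_n := Φ(λ^{−n}·z) satisfies z_0 = w, p(z_{n+1}) = z_n for all n ≥ 0, and λⁿ·z_n → z as n → ∞. Hence the solutions of Φ(z) = w are exactly the limits of the rescaled backward orbits (λⁿ·z_n) of w under p. -/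
open Filter Topology

lemma slope_decomp_aux (f : ℂ → ℂ) (hf : HasDerivAt f 1 0) (hf0 : f 0 = 0) :
    ∃ q : ℂ → ℂ, Tendsto q (𝓝 0) (𝓝 0) ∧ ∀ u, f u = u * (1 + q u) := by
  refine ⟨fun u => if u = 0 then 0 else f u / u - 1, ?_, ?_⟩
  · refine Tendsto.mono_left ?_ (ge_of_eq (nhdsNE_sup_pure (0:ℂ)))
    refine tendsto_sup.2 ⟨?_, ?_⟩
    · have h := (hasDerivAt_iff_tendsto_slope.1 hf).sub_const 1
      simp only [sub_self] at h
      refine h.congr' ?_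
      filter_upwards [eventually_mem_nhdsWithin] with u hu
      have hu' : u ≠ 0 := hu
      simp [slope_def_field, hf0, hu', div_sub_div_same]
    · have h := tendsto_pure_nhds (fun u : ℂ => if u = 0 then 0 else f u / u - 1) 0
      simpa using h
  · intro u
    by_cases h : u = 0
    · simp [h, hf0]
    · simp only [h, if_false]; field_simp; ring

/-- Lemma 5 of the paper, reformulated. The solutions of `Φ(z) = w` are
exactly the limits of the rescaled backward orbits `(λⁿ zₙ)` of `w` under `p`:
(i) if `z₀ = w`, `p(z_{n+1}) = z_n` and `λⁿ zₙ → z`, then `Φ(z) = w`;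
(ii) if `Φ(z) = w` then `zₙ := Φ(λ^{−n} z)` is such a backward orbit with `λⁿ zₙ → z`. -/
theorem poincare_level_sets_backward_orbits
    (p : Polynomial ℝ) (d : ℕ) (lam : ℝ)
    (hd : 2 ≤ d) (hdeg : p.natDegree = d)
    (hc0 : p.coeff 0 = 0) (hc1 : p.coeff 1 = lam) (hlam : 1 < lam)
    (Φ : ℂ → ℂ) (hΦ : Differentiable ℂ Φ)
    (hfe : ∀ z : ℂ, Φ (lam * z) = Polynomial.aeval (Φ z) p)
    (hΦ0 : Φ 0 = 0) (hΦ'0 : deriv Φ 0 = 1) :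
    (∀ (w z : ℂ) (zseq : ℕ → ℂ), zseq 0 = w →
        (∀ n : ℕ, Polynomial.aeval (zseq (n + 1)) p = zseq n) →
        Tendsto (fun n : ℕ => (lam : ℂ) ^ n * zseq n) atTop (nhds z) →
        Φ z = w) ∧
    (∀ w z : ℂ, Φ z = w →
        Φ (((lam : ℂ) ^ (0 : ℕ))⁻¹ * z) = w ∧
        (∀ n : ℕ, Polynomial.aeval (Φ (((lam : ℂ) ^ (n + 1))⁻¹ * z)) p
          = Φ (((lam : ℂ) ^ n)⁻¹ * z)) ∧
        Tendsto (fun n : ℕ => (lam : ℂ) ^ n * Φ (((lam : ℂ) ^ n)⁻¹ * z))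
          atTop (nhds z)) := by
  have hlamR : (0:ℝ) < lam := lt_trans one_pos hlam
  have hlam0 : (lam : ℂ) ≠ 0 := by
    exact_mod_cast ne_of_gt hlamR
  have hpow : ∀ n : ℕ, ((lam:ℂ)^n) ≠ 0 := fun n => pow_ne_zero n hlam0
  set P : ℂ → ℂ := fun x => Polynomial.aeval x p with hP
  -- iterate lemma
  have hiter : ∀ (n : ℕ) (u : ℂ), Φ ((lam:ℂ)^n * u) = P^[n] (Φ u) := by
    intro n
    induction n with
    | zero => intro u; simp
    | succ n ih =>
      intro u
      have h : (lam:ℂ)^(n+1) * u = (lam:ℂ) * ((lam:ℂ)^n * u) := by ring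
      rw [h, hfe, ih, Function.iterate_succ_apply', hP]
  -- strict derivative of Φ at 0
  have hsd : HasStrictDerivAt Φ 1 0 := by
    obtain ⟨q, hq⟩ := hΦ.analyticAt 0
    have h := hq.hasStrictDerivAt
    have e := h.hasDerivAt.deriv
    rw [hΦ'0] at e
    rwa [← e] at h
  obtain ⟨qΦ, hqΦlim, hqΦ⟩ := slope_decomp_aux Φ hsd.hasDerivAt hΦ0
  -- tendsto of λ^{-n}
  have hinvpow : Tendsto (fun n : ℕ => ((lam:ℂ)^n)⁻¹) atTop (𝓝 0) := by
    simp only [← inv_pow]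
    refine tendsto_pow_atTop_nhds_zero_of_norm_lt_one ?_
    rw [norm_inv]
    have : ‖(lam:ℂ)‖ = lam := by
      rw [Complex.norm_real, Real.norm_of_nonneg hlamR.le]
    rw [this]
    rw [inv_lt_one_iff₀]
    right; exact hlam
  constructor
  · -- part (i)
    intro w z zseq h0 hrec hlim
    -- local inverse
    set ψ : ℂ → ℂ := hsd.localInverse Φ 1 0 one_ne_zero with hψ
    have hF := hsd.hasStrictFDerivAt_equiv one_ne_zero
    have hleft : ∀ᶠ x in 𝓝 (0:ℂ), ψ (Φ x) = x := hF.eventually_left_inverse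
    have hright : ∀ᶠ y in 𝓝 (0:ℂ), Φ (ψ y) = y := by
      have := hF.eventually_right_inverse
      rwa [hΦ0] at this
    have hψ0 : ψ 0 = 0 := by
      have := hleft.self_of_nhds
      rwa [hΦ0] at this
    have hψd : HasStrictDerivAt ψ 1 0 := by
      have := hsd.to_localInverse (hf' := one_ne_zero)
      rwa [hΦ0, inv_one] at this
    obtain ⟨qψ, hqψlim, hqψ⟩ := slope_decomp_aux ψ hψd.hasDerivAt hψ0
    -- key functional equation for ψ
    have key : ∀ᶠ v in 𝓝 (0:ℂ), ψ (P v) = (lam:ℂ) * ψ v := by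
      have hcont : Tendsto (fun v => (lam:ℂ) * ψ v) (𝓝 0) (𝓝 0) := by
        have := (hψd.hasDerivAt.continuousAt : ContinuousAt ψ 0)
        have h2 : Tendsto (fun v => (lam:ℂ) * ψ v) (𝓝 0) (𝓝 ((lam:ℂ) * ψ 0)) :=
          (continuous_const.continuousAt).mul this
        rwa [hψ0, mul_zero] at h2
      filter_upwards [hcont.eventually hleft, hright] with v hv1 hv2
      have : P v = Φ ((lam:ℂ) * ψ v) := by
        rw [hfe, hv2]
      rw [this, hv1]
    -- zseq tends to 0
    have hz0 : Tendsto zseq atTop (𝓝 (0:ℂ)) := by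
      have h := hinvpow.mul hlim
      simp only [zero_mul] at h
      refine h.congr fun n => ?_
      field_simp
    -- choose N
    obtain ⟨N, hN⟩ := eventually_atTop.1 ((hz0.eventually key).and (hz0.eventually hright))
    -- eventually constant
    have hconst : ∀ n, N ≤ n → (lam:ℂ)^n * ψ (zseq n) = (lam:ℂ)^N * ψ (zseq N) := by
      intro n hn
      induction n, hn using Nat.le_induction with
      | base => rfl
      | succ n hn ih =>
        have hk : ψ (zseq n) = (lam:ℂ) * ψ (zseq (n+1)) := by
          rw [← hrec n]; exact (hN (n+1) (by omega)).1
        calc (lam:ℂ)^(n+1) * ψ (zseq (n+1)) = (lam:ℂ)^n * ((lam:ℂ) * ψ (zseq (n+1))) := by ring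
        _ = (lam:ℂ)^n * ψ (zseq n) := by rw [← hk]
        _ = (lam:ℂ)^N * ψ (zseq N) := ih
    -- limit of λⁿ ψ(zₙ) is z
    have hlim2 : Tendsto (fun n : ℕ => (lam:ℂ)^n * ψ (zseq n)) atTop (𝓝 z) := by
      have h1 : Tendsto (fun n : ℕ => ((lam:ℂ)^n * zseq n) * (1 + qψ (zseq n)))
          atTop (𝓝 (z * (1 + 0))) :=
        hlim.mul (tendsto_const_nhds.add (hqψlim.comp hz0))
      simp only [add_zero, mul_one] at h1
      refine h1.congr fun n => ?_
      rw [hqψ (zseq n)]; ring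
    have hcz : (lam:ℂ)^N * ψ (zseq N) = z := by
      refine tendsto_nhds_unique ?_ hlim2
      refine tendsto_const_nhds.congr' ?_
      filter_upwards [eventually_ge_atTop N] with n hn
      exact (hconst n hn).symm
    have hψN : ψ (zseq N) = ((lam:ℂ)^N)⁻¹ * z := by
      field_simp [← hcz]
      linear_combination hcz
    have hzN : zseq N = Φ (((lam:ℂ)^N)⁻¹ * z) := by
      rw [← hψN, (hN N le_rfl).2]
    have hback : ∀ n, P^[n] (zseq n) = zseq 0 := by
      intro n
      induction n with
      | zero => rfl
      | succ n ih =>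
        rw [Function.iterate_succ_apply]
        have : P (zseq (n+1)) = zseq n := hrec n
        rw [this, ih]
    have hz : (lam:ℂ)^N * (((lam:ℂ)^N)⁻¹ * z) = z := by
      field_simp
    calc Φ z = Φ ((lam:ℂ)^N * (((lam:ℂ)^N)⁻¹ * z)) := by rw [hz]
    _ = P^[N] (Φ (((lam:ℂ)^N)⁻¹ * z)) := hiter N _
    _ = P^[N] (zseq N) := by rw [← hzN]
    _ = zseq 0 := hback N
    _ = w := h0
  · -- part (ii)
    intro w z hw
    refine ⟨by simpa using hw, ?_, ?_⟩
    · intro n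
      have h : (lam:ℂ) * (((lam:ℂ)^(n+1))⁻¹ * z) = ((lam:ℂ)^n)⁻¹ * z := by
        rw [pow_succ]
        field_simp
      rw [← hfe, h]
    · have hu : Tendsto (fun n : ℕ => ((lam:ℂ)^n)⁻¹ * z) atTop (𝓝 0) := by
        have := hinvpow.mul_const z
        rwa [zero_mul] at this
      have h1 : Tendsto (fun n : ℕ => z * (1 + qΦ (((lam:ℂ)^n)⁻¹ * z)))
          atTop (𝓝 (z * (1 + 0))) :=
        tendsto_const_nhds.mul (tendsto_const_nhds.add (hqΦlim.comp hu))
      simp only [add_zero, mul_one] at h1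
      refine h1.congr fun n => ?_
      rw [hqΦ (((lam:ℂ)^n)⁻¹ * z)]
      field_simp
end

section
/- For every integer k ≥ 0 and every complex number s with −k−1 < Re s < −k, the integral ∫₀^∞ ( log(1+x) − x + x²/2 − ⋯ + (−1)^k x^k/k ) x^{s−1} dx (i.e. ∫₀^∞ ( log(1+x) − Σ_{j=1}^{k} (−1)^{j−1} x^j / j ) x^{s−1} dx) converges and equals π / (s·sin(πs)). -/
section FKsec
open Filter Topology MeasureTheory Set


noncomputable def Fk (k : ℕ) (x : ℝ) : ℝ :=
  Real.log (1 + x) - ∑ j ∈ Finset.range k, (-1 : ℝ) ^ j * x ^ (j + 1) / (j + 1)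

lemma Fk_zero (k : ℕ) : Fk k 0 = 0 := by
  simp [Fk]

lemma Fk_hasDerivAt (k : ℕ) {x : ℝ} (hx : 0 < 1 + x) :
    HasDerivAt (Fk k) ((-1 : ℝ) ^ k * x ^ k / (1 + x)) x := by
  have hlog : HasDerivAt (fun y : ℝ => Real.log (1 + y)) (1 / (1 + x)) x := by
    have := ((hasDerivAt_id x).const_add 1).log hx.ne'
    simpa using this
  have hsum : HasDerivAt (fun y : ℝ => ∑ j ∈ Finset.range k, (-1:ℝ)^j * y^(j+1) / (j+1))
      (∑ j ∈ Finset.range k, (-1:ℝ)^j * x^j) x := by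
    have : ∀ j ∈ Finset.range k, HasDerivAt (fun y : ℝ => (-1:ℝ)^j * y^(j+1) / (j+1))
        ((-1:ℝ)^j * x^j) x := by
      intro j _
      have h := ((hasDerivAt_pow (j+1) x).const_mul ((-1:ℝ)^j)).div_const ((j:ℝ)+1)
      have hj : ((j:ℝ)+1) ≠ 0 := by positivity
      refine h.congr_deriv ?_
      push_cast
      field_simp
    simpa using HasDerivAt.fun_sum this
  have h := hlog.sub hsum
  have hx1 : -x ≠ 1 := by intro h'; rw [← h'] at hx; simp at hx
  have hgeom : ∑ j ∈ Finset.range k, (-1:ℝ)^j * x^j = ((-x)^k - 1) / (-x - 1) := by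
    rw [show (∑ j ∈ Finset.range k, (-1:ℝ)^j * x^j) = ∑ j ∈ Finset.range k, (-x)^j from
      Finset.sum_congr rfl fun j _ => (neg_pow x j).symm, geom_sum_eq hx1]
  have hneg : -x - 1 = -(1+x) := by ring
  have hder_eq : 1 / (1 + x) - ∑ j ∈ Finset.range k, (-1:ℝ)^j * x^j
      = (-1:ℝ)^k * x^k / (1 + x) := by
    rw [hgeom, hneg, div_neg, sub_neg_eq_add, ← add_div]
    congr 1
    rw [neg_pow]
    ring
  exact hder_eq ▸ h

lemma Fk_eq_integral (k : ℕ) {x : ℝ} (hx : 0 ≤ x) :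
    Fk k x = ∫ t in (0:ℝ)..x, (-1:ℝ)^k * t^k / (1+t) := by
  have hd : ∀ t ∈ Set.uIcc (0:ℝ) x, HasDerivAt (Fk k) ((-1:ℝ)^k * t^k / (1+t)) t := by
    intro t ht
    rw [Set.uIcc_of_le hx] at ht
    exact Fk_hasDerivAt k (by linarith [ht.1])
  have hint : IntervalIntegrable (fun t : ℝ => (-1:ℝ)^k * t^k / (1+t)) volume 0 x := by
    apply ContinuousOn.intervalIntegrable
    apply ContinuousOn.div
    · fun_prop
    · fun_prop
    · intro t ht
      rw [Set.uIcc_of_le hx] at ht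
      intro h; linarith [ht.1]
  rw [intervalIntegral.integral_eq_sub_of_hasDerivAt hd hint, Fk_zero, sub_zero]

lemma Fk_bound (k : ℕ) {ε : ℝ} (hε0 : 0 < ε) (hε1 : ε ≤ 1) {x : ℝ} (hx : 0 ≤ x) :
    |Fk k x| ≤ x ^ ((k:ℝ) + ε) / ((k:ℝ) + ε) := by
  have hkε : (0:ℝ) < (k:ℝ) + ε := by positivity
  rcases eq_or_lt_of_le hx with rfl | hx'
  · rw [Fk_zero, Real.zero_rpow hkε.ne', abs_zero, zero_div]
  have hgint : IntervalIntegrable (fun t : ℝ => t ^ ((k:ℝ) - 1 + ε)) volume 0 x :=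
    intervalIntegral.intervalIntegrable_rpow' (by push_cast; linarith)
  have hgval : ∫ t in (0:ℝ)..x, t ^ ((k:ℝ) - 1 + ε) = x ^ ((k:ℝ) + ε) / ((k:ℝ) + ε) := by
    rw [integral_rpow (Or.inl (by push_cast; linarith))]
    have he : (k:ℝ) - 1 + ε + 1 = (k:ℝ) + ε := by ring
    rw [he, Real.zero_rpow hkε.ne', sub_zero]
  have hptwise : ∀ᵐ t ∂(volume.restrict (Set.uIoc (0:ℝ) x)),
      ‖(-1:ℝ)^k * t^k / (1+t)‖ ≤ t ^ ((k:ℝ) - 1 + ε) := by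
    rw [Set.uIoc_of_le hx]
    refine (ae_restrict_iff' measurableSet_Ioc).mpr (Eventually.of_forall fun t ht => ?_)
    obtain ⟨ht0, htx⟩ := ht
    rw [Real.norm_eq_abs, abs_div, abs_mul, abs_pow, abs_pow, abs_neg, abs_one, one_pow, one_mul,
      abs_of_nonneg ht0.le, abs_of_pos (by linarith : (0:ℝ) < 1 + t)]
    have key : t ^ k ≤ t ^ ((k:ℝ) - 1 + ε) * (1 + t) := by
      have h1 : (t:ℝ) ^ k = t ^ ((k:ℝ) - 1 + ε) * t ^ (1 - ε) := by
        rw [← Real.rpow_add ht0, ← Real.rpow_natCast t k]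
        congr 1; ring
      rw [h1]
      apply mul_le_mul_of_nonneg_left _ (Real.rpow_nonneg ht0.le _)
      rcases le_or_gt t 1 with h | h
      · calc t ^ (1 - ε) ≤ 1 := Real.rpow_le_one ht0.le h (by linarith)
          _ ≤ 1 + t := by linarith
      · calc t ^ (1 - ε) ≤ t ^ (1:ℝ) :=
            Real.rpow_le_rpow_of_exponent_le h.le (by linarith)
          _ = t := Real.rpow_one t
          _ ≤ 1 + t := by linarith
    rw [div_le_iff₀ (by linarith)]
    exact key
  have h := intervalIntegral.norm_integral_le_abs_of_norm_le hptwise hgint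
  rw [hgval] at h
  rw [Fk_eq_integral k hx]
  calc |∫ t in (0:ℝ)..x, (-1:ℝ)^k * t^k / (1+t)|
      ≤ |x ^ ((k:ℝ) + ε) / ((k:ℝ) + ε)| := h
    _ = x ^ ((k:ℝ) + ε) / ((k:ℝ) + ε) := abs_of_nonneg (by positivity)

end FKsec

section BetaSec
open Filter Topology MeasureTheory Set Complex


private lemma subst_image : (fun t : ℝ => t / (1 - t)) '' Ioo 0 1 = Ioi (0:ℝ) := by
  ext y
  constructor
  · rintro ⟨t, ⟨ht0, ht1⟩, rfl⟩
    exact div_pos ht0 (by linarith)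
  · intro hy
    have hy' : (0:ℝ) < y := hy
    refine ⟨y / (1 + y), ⟨div_pos hy' (by linarith), ?_⟩, ?_⟩
    · rw [div_lt_one (by linarith)]; linarith
    · show (y / (1 + y)) / (1 - y / (1 + y)) = y
      have h1 : 1 - y / (1 + y) = 1 / (1 + y) := by field_simp; ring
      rw [h1]; field_simp

private lemma subst_inj : InjOn (fun t : ℝ => t / (1 - t)) (Ioo 0 1) := by
  intro a ⟨ha0, ha1⟩ b ⟨hb0, hb1⟩ h
  have h1a : (1:ℝ) - a ≠ 0 := by linarith
  have h1b : (1:ℝ) - b ≠ 0 := by linarith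
  field_simp at h
  nlinarith [h]

private lemma subst_deriv {t : ℝ} (ht : t ∈ Ioo (0:ℝ) 1) :
    HasDerivWithinAt (fun t : ℝ => t / (1 - t)) (((1 - t) ^ 2)⁻¹) (Ioo 0 1) t := by
  obtain ⟨ht0, ht1⟩ := ht
  have h1t : (1:ℝ) - t ≠ 0 := by linarith
  have := (hasDerivAt_id t).div ((hasDerivAt_const t (1:ℝ)).sub (hasDerivAt_id t)) h1t
  simp only [one_mul, zero_sub, mul_neg, mul_one, sub_neg_eq_add] at this
  refine (this.congr_deriv ?_).hasDerivWithinAt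
  show (1 - t + t) / (1 - t) ^ 2 = ((1 - t) ^ 2)⁻¹
  ring

private lemma beta_integrand_eq {a : ℂ} {t : ℝ} (ht : t ∈ Ioo (0:ℝ) 1) :
    |((1 - t) ^ 2)⁻¹| • ((((t / (1 - t) : ℝ)) : ℂ) ^ (a - 1) / (1 + ((t / (1 - t) : ℝ) : ℂ)))
      = (t : ℂ) ^ (a - 1) * (1 - (t : ℂ)) ^ (1 - a - 1) := by
  obtain ⟨ht0, ht1⟩ := ht
  have h1t : (0:ℝ) < 1 - t := by linarith
  have hu : ((1 - t : ℝ) : ℂ) ≠ 0 := by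
    simp only [ne_eq, ofReal_eq_zero]; linarith
  have harg : ((1 - t : ℝ) : ℂ).arg ≠ Real.pi := by
    rw [Complex.arg_ofReal_of_nonneg h1t.le]; exact Real.pi_ne_zero.symm
  have h1 : ((t / (1 - t) : ℝ) : ℂ) ^ (a - 1)
      = (t : ℂ) ^ (a - 1) * (((1 - t : ℝ) : ℂ) ^ (a - 1))⁻¹ := by
    have : (t / (1 - t) : ℝ) = t * (1 - t)⁻¹ := by ring
    rw [this, ofReal_mul, Complex.mul_cpow_ofReal_nonneg ht0.le (by positivity),
      ofReal_inv, Complex.inv_cpow _ _ harg]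
  have h2 : (1 : ℂ) + ((t / (1 - t) : ℝ) : ℂ) = (((1 - t)⁻¹ : ℝ) : ℂ) := by
    rw [← ofReal_one, ← ofReal_add]
    congr 1
    field_simp
    ring
  have h3 : |((1 - t) ^ 2)⁻¹| = ((1 - t) ^ 2)⁻¹ := abs_of_pos (by positivity)
  have hu' : (1 : ℂ) - (t:ℂ) ≠ 0 := by
    intro h; apply hu; push_cast; exact h
  have hc2 : ((1:ℂ) - (t:ℂ)) ^ (2:ℕ) = ((1:ℂ) - (t:ℂ)) ^ (2:ℂ) := by
    rw [show ((2:ℂ)) = ((2:ℕ):ℂ) by norm_num, Complex.cpow_natCast]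
  have key : (((1:ℂ) - (t:ℂ)) ^ (2:ℂ))⁻¹ * (((1:ℂ) - (t:ℂ)) ^ (a-1))⁻¹ * ((1:ℂ) - (t:ℂ))
      = ((1:ℂ) - (t:ℂ)) ^ (1 - a - 1) := by
    calc (((1:ℂ) - (t:ℂ)) ^ (2:ℂ))⁻¹ * (((1:ℂ) - (t:ℂ)) ^ (a-1))⁻¹ * ((1:ℂ) - (t:ℂ))
        = ((1:ℂ) - (t:ℂ)) ^ (-2:ℂ) * (((1:ℂ) - (t:ℂ)) ^ (-(a-1)) * ((1:ℂ) - (t:ℂ)) ^ (1:ℂ)) := by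
          rw [Complex.cpow_neg, Complex.cpow_neg, Complex.cpow_one]; ring
      _ = ((1:ℂ) - (t:ℂ)) ^ ((-2:ℂ) + (-(a-1) + 1)) := by
          rw [Complex.cpow_add _ _ hu', Complex.cpow_add _ _ hu']
      _ = ((1:ℂ) - (t:ℂ)) ^ (1 - a - 1) := by congr 1; ring
  rw [h1, h2, h3, real_smul]
  push_cast
  rw [div_eq_mul_inv, inv_inv, hc2, ← key]
  ring

theorem beta_Ioi_integrable {a : ℂ} (ha0 : 0 < a.re) (ha1 : a.re < 1) :
    IntegrableOn (fun x : ℝ => (x : ℂ) ^ (a - 1) / (1 + (x : ℂ))) (Ioi 0) := by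
  have hbeta : IntegrableOn (fun x : ℝ => (x : ℂ) ^ (a - 1) * (1 - (x:ℂ)) ^ (1 - a - 1))
      (Ioo 0 1) := by
    rw [← integrableOn_Ioc_iff_integrableOn_Ioo,
      ← intervalIntegrable_iff_integrableOn_Ioc_of_le zero_le_one]
    exact Complex.betaIntegral_convergent ha0 (by simp [Complex.sub_re]; linarith)
  rw [← subst_image, integrableOn_image_iff_integrableOn_abs_deriv_smul measurableSet_Ioo
    (fun t ht => subst_deriv ht) subst_inj]
  exact hbeta.congr_fun (fun t ht => (beta_integrand_eq ht).symm) measurableSet_Ioo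

theorem beta_Ioi_integral {a : ℂ} (ha0 : 0 < a.re) (ha1 : a.re < 1) :
    ∫ x in Ioi (0:ℝ), (x : ℂ) ^ (a - 1) / (1 + (x : ℂ))
      = (Real.pi : ℂ) / Complex.sin (Real.pi * a) := by
  have h1a : 0 < (1 - a).re := by simp [Complex.sub_re]; linarith
  have hβ : Complex.betaIntegral a (1 - a) = (Real.pi : ℂ) / Complex.sin (Real.pi * a) := by
    have := Complex.Gamma_mul_Gamma_eq_betaIntegral ha0 h1a
    rw [add_sub_cancel, Complex.Gamma_one, one_mul] at this
    rw [← this, Complex.Gamma_mul_Gamma_one_sub, mul_comm (Real.pi:ℂ) a]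
  rw [← hβ, ← subst_image, integral_image_eq_integral_abs_deriv_smul measurableSet_Ioo
    (fun t ht => subst_deriv ht) subst_inj]
  rw [setIntegral_congr_fun measurableSet_Ioo (fun t ht => beta_integrand_eq ht)]
  rw [Complex.betaIntegral, intervalIntegral.integral_of_le zero_le_one,
    ← integral_Ioc_eq_integral_Ioo]

end BetaSec

section MainSec
open Filter Topology MeasureTheory Set Complex


section MainProof

/-- For every integer `k ≥ 0` and `s ∈ ℂ` with `−k−1 < Re s < −k`,
`∫₀^∞ (log(1+x) − x + x²/2 − ⋯ + (−1)^k x^k/k) x^{s−1} dx = π/(s sin(πs))`. -/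
theorem mellin_log_one_add_eq_pi_div_sin
    (k : ℕ) (s : ℂ) (h₁ : -(k + 1 : ℝ) < s.re) (h₂ : s.re < -(k : ℝ)) :
    IntegrableOn
      (fun x : ℝ =>
        ((Real.log (1 + x)
            - ∑ j ∈ Finset.range k, (-1 : ℝ) ^ j * x ^ (j + 1) / (j + 1) : ℝ) : ℂ)
          * (x : ℂ) ^ (s - 1))
      (Set.Ioi (0 : ℝ)) ∧
    (∫ x in Set.Ioi (0 : ℝ),
        ((Real.log (1 + x)
            - ∑ j ∈ Finset.range k, (-1 : ℝ) ^ j * x ^ (j + 1) / (j + 1) : ℝ) : ℂ)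
          * (x : ℂ) ^ (s - 1))
      = (Real.pi : ℂ) / (s * Complex.sin (Real.pi * s)) := by
  have hk0 : (0:ℝ) ≤ (k:ℝ) := Nat.cast_nonneg k
  have hs0 : s.re < 0 := by linarith
  have hsne : s ≠ 0 := by
    intro h; rw [h] at hs0; simp at hs0
  set δ : ℝ := -(k:ℝ) - s.re with hδdef
  have hδ0 : 0 < δ := by simp only [hδdef]; linarith
  set ε : ℝ := min 1 (δ/2) with hεdef
  have hε0 : 0 < ε := lt_min one_pos (by linarith)
  have hε1 : ε ≤ 1 := min_le_left _ _
  have hεδ : ε < δ := lt_of_le_of_lt (min_le_right _ _) (by linarith)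
  -- continuity of Fk on [0, ∞)
  have hFcont : ∀ x : ℝ, 0 ≤ x → ContinuousAt (Fk k) x := fun x hx =>
    (Fk_hasDerivAt k (by linarith)).continuousAt
  -- Step 1 : integrability of the main integrand
  have hFmeas : LocallyIntegrableOn (fun x : ℝ => ((Fk k x : ℝ) : ℂ)) (Ioi 0) := by
    apply ContinuousOn.locallyIntegrableOn _ measurableSet_Ioi
    exact fun x hx =>
      (Complex.continuous_ofReal.continuousAt.comp (hFcont x (le_of_lt hx))).continuousWithinAt
  have hnormF : ∀ x : ℝ, ‖((Fk k x : ℝ) : ℂ)‖ = |Fk k x| := fun x => by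
    rw [Complex.norm_real, Real.norm_eq_abs]
  have h_top : (fun x : ℝ => ((Fk k x : ℝ) : ℂ)) =O[atTop]
      (fun x : ℝ => x ^ (-(-((k:ℝ) + ε)))) := by
    apply Asymptotics.IsBigO.of_bound (((k:ℝ) + ε)⁻¹)
    filter_upwards [eventually_ge_atTop (0:ℝ)] with x hx
    rw [hnormF, neg_neg, Real.norm_eq_abs, _root_.abs_of_nonneg (Real.rpow_nonneg hx _)]
    calc |Fk k x| ≤ x ^ ((k:ℝ) + ε) / ((k:ℝ) + ε) := Fk_bound k hε0 hε1 hx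
      _ = ((k:ℝ) + ε)⁻¹ * x ^ ((k:ℝ) + ε) := by ring
  have h_bot : (fun x : ℝ => ((Fk k x : ℝ) : ℂ)) =O[𝓝[>] 0]
      (fun x : ℝ => x ^ (-(-((k:ℝ) + 1)))) := by
    apply Asymptotics.IsBigO.of_bound (((k:ℝ) + 1)⁻¹)
    filter_upwards [self_mem_nhdsWithin] with x hx
    have hx0 : (0:ℝ) ≤ x := le_of_lt hx
    rw [hnormF, neg_neg, Real.norm_eq_abs, _root_.abs_of_nonneg (Real.rpow_nonneg hx0 _)]
    calc |Fk k x| ≤ x ^ ((k:ℝ) + 1) / ((k:ℝ) + 1) := Fk_bound k one_pos le_rfl hx0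
      _ = ((k:ℝ) + 1)⁻¹ * x ^ ((k:ℝ) + 1) := by ring
  have hmc : MellinConvergent (fun x : ℝ => ((Fk k x : ℝ) : ℂ)) s :=
    mellinConvergent_of_isBigO_rpow hFmeas h_top (by simp only [hεdef]; linarith)
      h_bot (by push_cast; linarith)
  have hInt : IntegrableOn (fun x : ℝ => ((Fk k x : ℝ) : ℂ) * (x:ℂ) ^ (s-1)) (Ioi 0) := by
    have hmc' : IntegrableOn (fun t : ℝ => (t:ℂ) ^ (s-1) • ((Fk k t : ℝ) : ℂ)) (Ioi 0) := hmc
    apply IntegrableOn.congr_fun hmc' _ measurableSet_Ioi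
    intro t ht
    simp [smul_eq_mul, mul_comm]
  -- Step 2 : the beta integral with parameter a = k + 1 + s
  set a : ℂ := (k:ℂ) + 1 + s with hadef
  have ha_re : a.re = (k:ℝ) + 1 + s.re := by simp [hadef]
  have ha0 : 0 < a.re := by rw [ha_re]; linarith
  have ha1 : a.re < 1 := by rw [ha_re]; linarith
  have hbetaInt := beta_Ioi_integrable ha0 ha1
  have hbetaVal := beta_Ioi_integral ha0 ha1
  set A : ℝ → ℂ := fun x => (((-1:ℝ)^k * x^k / (1+x) : ℝ) : ℂ) * ((x:ℂ)^s / s) with hAdef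
  have hAeq : ∀ x ∈ Ioi (0:ℝ),
      A x = (((-1:ℂ)^k)/s) • ((x:ℂ)^(a-1) / (1 + (x:ℂ))) := by
    intro x hx
    have hx0 : (0:ℝ) < x := hx
    have hxne : (x:ℂ) ≠ 0 := ofReal_ne_zero.mpr hx0.ne'
    have h1x : (1:ℂ) + (x:ℂ) ≠ 0 := by
      intro h
      have := congrArg Complex.re h
      simp at this
      linarith
    have hexp : (x:ℂ)^(a-1) = (x:ℂ)^(k:ℕ) * (x:ℂ)^s := by
      rw [show a - 1 = (k:ℂ) + s by rw [hadef]; ring, Complex.cpow_add _ _ hxne,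
        Complex.cpow_natCast]
    rw [hAdef, smul_eq_mul, hexp]
    push_cast
    field_simp
  have hAint : IntegrableOn A (Ioi 0) := by
    have h1 : IntegrableOn
        (fun x : ℝ => (((-1:ℂ)^k)/s) • ((x:ℂ)^(a-1) / (1 + (x:ℂ)))) (Ioi 0) :=
      hbetaInt.smul (((-1:ℂ)^k)/s)
    apply IntegrableOn.congr_fun h1 _ measurableSet_Ioi
    intro x hx
    exact (hAeq x hx).symm
  have hAval : ∫ x in Ioi (0:ℝ), A x
      = (((-1:ℂ)^k)/s) * ((Real.pi : ℂ) / Complex.sin ((Real.pi:ℂ) * a)) := by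
    rw [setIntegral_congr_fun measurableSet_Ioi hAeq, integral_smul, hbetaVal, smul_eq_mul]
  -- Step 3 : integration by parts
  set G : ℝ → ℂ := fun x => ((Fk k x : ℝ) : ℂ) * ((x:ℂ)^s / s) with hGdef
  have hG0 : G 0 = 0 := by
    rw [hGdef]
    simp [Fk_zero]
  have hnorms : ∀ x : ℝ, 0 < x → ‖G x‖ = |Fk k x| * (x ^ s.re / ‖s‖) := by
    intro x hx
    rw [hGdef]
    simp only [norm_mul, norm_div, hnormF,
      Complex.norm_cpow_eq_rpow_re_of_pos hx]
  have hGbound : ∀ x : ℝ, 0 < x → ∀ p : ℝ, 0 < p → p ≤ 1 →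
      ‖G x‖ ≤ x ^ ((k:ℝ) + p + s.re) / (((k:ℝ) + p) * ‖s‖) := by
    intro x hx p hp0 hp1
    rw [hnorms x hx, Real.rpow_add hx]
    calc |Fk k x| * (x ^ s.re / ‖s‖)
        ≤ (x ^ ((k:ℝ) + p) / ((k:ℝ) + p)) * (x ^ s.re / ‖s‖) := by
          exact mul_le_mul_of_nonneg_right (Fk_bound k hp0 hp1 hx.le)
            (div_nonneg (Real.rpow_nonneg hx.le _) (norm_nonneg s))
      _ = x ^ ((k:ℝ) + p) * x ^ s.re / (((k:ℝ) + p) * ‖s‖) := div_mul_div_comm _ _ _ _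
  have hsnorm0 : (0:ℝ) < ‖s‖ := norm_pos_iff.mpr hsne
  have hcont : ContinuousWithinAt G (Ici (0:ℝ)) 0 := by
    rw [ContinuousWithinAt, hG0]
    apply squeeze_zero_norm' (a := fun x => x ^ ((k:ℝ) + 1 + s.re) / (((k:ℝ) + 1) * ‖s‖))
    · filter_upwards [self_mem_nhdsWithin] with x hx
      rcases eq_or_lt_of_le (Set.mem_Ici.mp hx) with rfl | hx0
      · rw [hG0, norm_zero, Real.zero_rpow (by linarith : (k:ℝ) + 1 + s.re ≠ 0), zero_div]
      · exact hGbound x hx0 1 one_pos le_rfl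
    · have hp : (0:ℝ) < (k:ℝ) + 1 + s.re := by linarith
      have h1 : Tendsto (fun x : ℝ => x ^ ((k:ℝ) + 1 + s.re)) (𝓝 0) (𝓝 0) := by
        have := (Real.continuousAt_rpow_const 0 ((k:ℝ) + 1 + s.re) (Or.inr hp.le)).tendsto
        rwa [Real.zero_rpow hp.ne'] at this
      have := (h1.mono_left (nhdsWithin_le_nhds (s := Ici (0:ℝ)))).div_const (((k:ℝ) + 1) * ‖s‖)
      rwa [zero_div] at this
  have htop : Tendsto G atTop (𝓝 0) := by
    apply squeeze_zero_norm' (a := fun x => x ^ ((k:ℝ) + ε + s.re) / (((k:ℝ) + ε) * ‖s‖))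
    · filter_upwards [eventually_gt_atTop (0:ℝ)] with x hx
      exact hGbound x hx ε hε0 hε1
    · have hneg : (k:ℝ) + ε + s.re = -(δ - ε) := by rw [hδdef]; ring
      rw [hneg]
      have := (tendsto_rpow_neg_atTop (by linarith : 0 < δ - ε)).div_const
        (((k:ℝ) + ε) * ‖s‖)
      rwa [zero_div] at this
  have hderiv : ∀ x ∈ Ioi (0:ℝ),
      HasDerivAt G (A x + ((Fk k x : ℝ) : ℂ) * (x:ℂ)^(s-1)) x := by
    intro x hx
    have hx0 : (0:ℝ) < x := hx
    have h1 : HasDerivAt (fun y : ℝ => ((Fk k y : ℝ) : ℂ))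
        (((-1:ℝ)^k * x^k / (1+x) : ℝ) : ℂ) x :=
      (Fk_hasDerivAt k (by linarith)).ofReal_comp
    have h2 : HasDerivAt (fun y : ℝ => (y:ℂ)^s / s) ((x:ℂ)^(s-1)) x := by
      have hs1 : s - 1 ≠ -1 := by
        intro h
        apply hsne
        have := congrArg (· + 1) h
        simpa using this
      have h3 := hasDerivAt_ofReal_cpow_const' hx0.ne' hs1
      simpa using h3
    exact h1.mul h2
  have hsum_int : IntegrableOn
      (fun x : ℝ => A x + ((Fk k x : ℝ) : ℂ) * (x:ℂ)^(s-1)) (Ioi 0) := hAint.add hInt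
  have hparts := integral_Ioi_of_hasDerivAt_of_tendsto hcont hderiv hsum_int htop
  rw [hG0, sub_zero, integral_add hAint hInt, hAval] at hparts
  have hBval : ∫ x in Ioi (0:ℝ), ((Fk k x : ℝ) : ℂ) * (x:ℂ)^(s-1)
      = -((((-1:ℂ)^k)/s) * ((Real.pi:ℂ) / Complex.sin ((Real.pi:ℂ) * a))) := by
    linear_combination hparts
  -- Step 4 : sine shift and final algebra
  have hsin : Complex.sin ((Real.pi:ℂ) * a) = (-1:ℂ)^(k+1) * Complex.sin ((Real.pi:ℂ) * s) := by
    have h := Complex.sin_antiperiodic.add_nat_mul_eq (x := (Real.pi:ℂ) * s) (n := k+1)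
    rw [show (Real.pi:ℂ) * a = (Real.pi:ℂ) * s + ((k:ℕ)+1 : ℕ) * (Real.pi:ℂ) by
      rw [hadef]; push_cast; ring] at *
    rw [h]
  have hsinne : Complex.sin ((Real.pi:ℂ) * s) ≠ 0 := by
    rw [Complex.sin_ne_zero_iff]
    intro n h
    have hπ : (Real.pi:ℂ) ≠ 0 := Complex.ofReal_ne_zero.mpr Real.pi_ne_zero
    have hs_eq : s = (n:ℂ) := by
      apply mul_left_cancel₀ hπ
      rw [h]; ring
    have hre : s.re = (n:ℝ) := by rw [hs_eq]; simp
    rw [hre] at h₁ h₂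
    have hn1 : (n:ℝ) < -(k:ℝ) := h₂
    have hn2 : -((k:ℝ) + 1) < (n:ℝ) := h₁
    have : (n:ℤ) < -(k:ℤ) := by exact_mod_cast hn1
    have : -((k:ℤ) + 1) < (n:ℤ) := by exact_mod_cast hn2
    omega
  have hfinal : -((((-1:ℂ)^k)/s) * ((Real.pi:ℂ) / Complex.sin ((Real.pi:ℂ) * a)))
      = (Real.pi : ℂ) / (s * Complex.sin ((Real.pi:ℂ) * s)) := by
    rw [hsin, pow_succ]
    have hc : ((-1:ℂ)^k) * ((-1:ℂ)^k) = 1 := by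
      rw [← pow_add, ← two_mul, pow_mul]
      norm_num
    field_simp
  exact ⟨hInt, hBval.trans hfinal⟩

end MainProof

end MainSec
end
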